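/- arXiv:1304.8102 — 5 statements merged into one kernel-verified Lean document; each statement's English description precedes it below -/
import Mathlib

section
/- Let n ≥ 1 and let P_e be the symbol error rate of a decoder with center-convex decision regions in the AWGN channel, i.e. P_e(γ) = 1 − Σ_{i=1}^{M} q_i ∫_{Ω_i} (γ/(2π))^{n/2} exp(−γ‖x‖²/2) dx for SNR γ > 0. If Metric.closedBall 0 d_min ⊆ Ω_i for every i with d_min > 0, then P_e is convex on the set {γ : γ > 0 and γ ≥ (n−2)/d_min²}; in particular, for n ≤ 2, P_e is convex on all of (0,∞). -/
open MeasureTheory Real Set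

namespace SerAux

noncomputable def psi (n : ℕ) : ℝ → ℝ := fun u => u ^ (n - 1) * Real.exp (-u ^ 2 / 2)

noncomputable def Hfun (n : ℕ) : ℝ → ℝ := fun t => ∫ u in (0:ℝ)..t, psi n u

lemma psi_continuous (n : ℕ) : Continuous (psi n) := by
  unfold psi; fun_prop

lemma Hfun_hasDerivAt (n : ℕ) (t : ℝ) : HasDerivAt (Hfun n) (psi n t) t :=
  ((psi_continuous n).integral_hasStrictDerivAt 0 t).hasDerivAt

lemma concaveOn_congr {D : Set ℝ} {f g : ℝ → ℝ} (hf : ConcaveOn ℝ D f)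
    (h : ∀ x ∈ D, g x = f x) : ConcaveOn ℝ D g :=
  ⟨hf.1, fun x hx y hy a b ha hb hab => by
    rw [h x hx, h y hy, h _ (hf.1 hx hy ha hb hab)]
    exact hf.2 hx hy ha hb hab⟩

lemma setD_eq (c : ℝ) : {γ : ℝ | 0 < γ ∧ c ≤ γ} = Ioi 0 ∩ Ici c := by
  ext γ; simp [mem_Ioi, mem_Ici, and_comm]

lemma convex_setD (c : ℝ) : Convex ℝ {γ : ℝ | 0 < γ ∧ c ≤ γ} := by
  rw [setD_eq]; exact (convex_Ioi 0).inter (convex_Ici c)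

/-- key 1-D monotonicity: `x ↦ exp (a * log x - x^2/2)` is antitone for `x ≥ √a`. -/
lemma exp_aux_antitone {a x₁ x₂ : ℝ} (hx₁ : 0 < x₁) (h12 : x₁ ≤ x₂) (hax : a ≤ x₁ ^ 2) :
    a * Real.log x₂ - x₂ ^ 2 / 2 ≤ a * Real.log x₁ - x₁ ^ 2 / 2 := by
  have hx₂ : 0 < x₂ := hx₁.trans_le h12
  have hlogm : Real.log x₁ ≤ Real.log x₂ := Real.log_le_log hx₁ h12
  have hlog2 : x₁ * (Real.log x₂ - Real.log x₁) ≤ x₂ - x₁ := by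
    have h := Real.log_le_sub_one_of_pos (show 0 < x₂ / x₁ by positivity)
    rw [Real.log_div hx₂.ne' hx₁.ne'] at h
    have := mul_le_mul_of_nonneg_left h hx₁.le
    calc x₁ * (Real.log x₂ - Real.log x₁) ≤ x₁ * (x₂ / x₁ - 1) := this
      _ = x₂ - x₁ := by field_simp
  rcases le_or_gt a 0 with ha | ha
  · have hsq : x₁ ^ 2 ≤ x₂ ^ 2 := by nlinarith
    nlinarith [mul_nonpos_of_nonpos_of_nonneg ha (sub_nonneg.2 hlogm)]
  · have h1 : a * (x₁ * (Real.log x₂ - Real.log x₁)) ≤ a * (x₂ - x₁) :=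
      mul_le_mul_of_nonneg_left hlog2 ha.le
    have h2 : a * (x₂ - x₁) ≤ x₁ ^ 2 * (x₂ - x₁) :=
      mul_le_mul_of_nonneg_right hax (sub_nonneg.2 h12)
    have h3 : (0:ℝ) ≤ x₁ * ((x₂ - x₁) * (x₂ - x₁)) :=
      mul_nonneg hx₁.le (mul_nonneg (sub_nonneg.2 h12) (sub_nonneg.2 h12))
    nlinarith [mul_pos hx₁ hx₁, sub_nonneg.2 hlogm]

lemma m_eq (n : ℕ) (hn : 1 ≤ n) {x : ℝ} (hx : 0 < x) :
    x ^ (n - 1) * Real.exp (-x ^ 2 / 2) / x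
      = Real.exp (((n:ℝ) - 2) * Real.log x - x ^ 2 / 2) := by
  have h1 : Real.exp (((n:ℝ) - 2) * Real.log x) = x ^ ((n:ℝ) - 2) := by
    rw [Real.rpow_def_of_pos hx, mul_comm]
  have h2 : x ^ ((n:ℝ) - 2) = x ^ (n - 1) / x := by
    have hc : ((n - 1 : ℕ) : ℝ) = (n:ℝ) - 1 := by
      rw [Nat.cast_sub hn]; norm_num
    rw [show (n:ℝ) - 2 = ((n - 1 : ℕ) : ℝ) - 1 by rw [hc]; ring,
      Real.rpow_sub hx, Real.rpow_one, Real.rpow_natCast]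
  rw [Real.exp_sub, h1, h2, show -x ^ 2 / 2 = -(x ^ 2 / 2) by ring, Real.exp_neg]
  field_simp

/-- The 1-D concave building block: `γ ↦ c * Hfun n (√γ * R)`. -/
lemma concave_scaled (n : ℕ) (hn : 1 ≤ n) {c R dmin : ℝ} (hc : 0 ≤ c)
    (hd : 0 < dmin) (hR : dmin ≤ R) :
    ConcaveOn ℝ {γ : ℝ | 0 < γ ∧ ((n:ℝ) - 2) / dmin ^ 2 ≤ γ}
      (fun γ => c * Hfun n (Real.sqrt γ * R)) := by
  have hR0 : 0 < R := hd.trans_le hR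
  set cc := ((n:ℝ) - 2) / dmin ^ 2 with hcc
  set D : Set ℝ := {γ : ℝ | 0 < γ ∧ cc ≤ γ} with hD
  have hDconv : Convex ℝ D := convex_setD cc
  have hkey : ∀ γ ∈ D, (n:ℝ) - 2 ≤ γ * R ^ 2 := by
    rintro γ ⟨hγ0, hγc⟩
    rcases le_or_gt ((n:ℝ) - 2) 0 with h | h
    · nlinarith
    · have h1 : (n:ℝ) - 2 ≤ γ * dmin ^ 2 := by
        rw [div_le_iff₀ (by positivity)] at hγc; linarith
      nlinarith [pow_le_pow_left₀ hd.le hR 2]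
  have hderiv : ∀ γ : ℝ, 0 < γ →
      HasDerivAt (fun γ => c * Hfun n (Real.sqrt γ * R))
        (c * (psi n (Real.sqrt γ * R) * (1 / (2 * Real.sqrt γ) * R))) γ := by
    intro γ hγ
    have hs : HasDerivAt Real.sqrt (1 / (2 * Real.sqrt γ)) γ :=
      Real.hasDerivAt_sqrt hγ.ne'
    have h1 : HasDerivAt (fun γ => Real.sqrt γ * R) (1 / (2 * Real.sqrt γ) * R) γ :=
      hs.mul_const R
    exact ((Hfun_hasDerivAt n _).comp γ h1).const_mul c
  have hint : interior D = Ioi 0 ∩ Ioi cc := by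
    rw [hD, setD_eq, interior_inter, interior_Ioi, interior_Ici]
  have hintD : interior D ⊆ D := interior_subset
  have hsub : D ⊆ Ioi (0:ℝ) := fun γ hγ => hγ.1
  refine AntitoneOn.concaveOn_of_deriv hDconv ?_ ?_ ?_
  · exact fun γ hγ => ((hderiv γ (hsub hγ)).differentiableAt).continuousAt.continuousWithinAt
  · exact fun γ hγ =>
      ((hderiv γ (hsub (hintD hγ))).differentiableAt).differentiableWithinAt
  · intro γ₁ h₁ γ₂ h₂ h12
    rw [(hderiv γ₁ (hsub (hintD h₁))).deriv, (hderiv γ₂ (hsub (hintD h₂))).deriv]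
    have hγ₁ : 0 < γ₁ := (hsub (hintD h₁))
    have hγ₂ : 0 < γ₂ := (hsub (hintD h₂))
    set s₁ := Real.sqrt γ₁ with hs₁
    set s₂ := Real.sqrt γ₂ with hs₂
    have hs₁0 : 0 < s₁ := Real.sqrt_pos.2 hγ₁
    have hs₂0 : 0 < s₂ := Real.sqrt_pos.2 hγ₂
    have hs12 : s₁ ≤ s₂ := Real.sqrt_le_sqrt h12
    have hx₁0 : 0 < s₁ * R := by positivity
    have hx12 : s₁ * R ≤ s₂ * R := mul_le_mul_of_nonneg_right hs12 hR0.le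
    have hax : (n:ℝ) - 2 ≤ (s₁ * R) ^ 2 := by
      have := hkey γ₁ (hintD h₁)
      calc (n:ℝ) - 2 ≤ γ₁ * R ^ 2 := this
        _ = (s₁ * R) ^ 2 := by rw [mul_pow, hs₁, Real.sq_sqrt hγ₁.le]
    have hm : (s₂*R) ^ (n-1) * Real.exp (-(s₂*R) ^ 2 / 2) / (s₂*R)
        ≤ (s₁*R) ^ (n-1) * Real.exp (-(s₁*R) ^ 2 / 2) / (s₁*R) := by
      rw [m_eq n hn hx₁0, m_eq n hn (hx₁0.trans_le hx12)]
      exact Real.exp_le_exp.2 (exp_aux_antitone hx₁0 hx12 hax)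
    have hrw : ∀ s : ℝ, 0 < s →
        psi n (s * R) * (1 / (2 * s) * R)
          = (R^2/2) * ((s*R) ^ (n-1) * Real.exp (-(s*R) ^ 2 / 2) / (s*R)) := by
      intro s hs
      unfold psi
      field_simp
    rw [hrw s₁ hs₁0, hrw s₂ hs₂0]
    have := mul_le_mul_of_nonneg_left hm (show (0:ℝ) ≤ R^2/2 by positivity)
    exact mul_le_mul_of_nonneg_left this hc

lemma integrand_key (n : ℕ) (hn : 1 ≤ n) {γ : ℝ} (hγ : 0 < γ) (r : ℝ) :
    r ^ (n - 1) * (γ ^ ((n:ℝ)/2) * Real.exp (-γ * r ^ 2 / 2))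
      = Real.sqrt γ * psi n (Real.sqrt γ * r) := by
  set s := Real.sqrt γ with hs
  have hs0 : 0 < s := Real.sqrt_pos.2 hγ
  have hγs : γ = s ^ 2 := (Real.sq_sqrt hγ.le).symm
  have hpow : γ ^ ((n:ℝ)/2) = s ^ n := by
    rw [show (n:ℝ)/2 = (1/2) * n by ring, Real.rpow_mul hγ.le, Real.rpow_natCast,
      ← Real.sqrt_eq_rpow]
  have hpows : s ^ (n - 1) * s = s ^ n := by
    rw [← pow_succ, Nat.sub_add_cancel hn]
  have hsq : -(s * r) ^ 2 / 2 = -γ * r ^ 2 / 2 := by rw [mul_pow, ← hγs]; ring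
  rw [hpow]
  unfold psi
  rw [mul_pow, hsq, ← hpows]
  ring

lemma subst_Ioo (n : ℕ) (hn : 1 ≤ n) {γ R : ℝ} (hγ : 0 < γ) (hR : 0 ≤ R) :
    (∫ r in Ioo (0:ℝ) R, r ^ (n - 1) * (γ ^ ((n:ℝ)/2) * Real.exp (-γ * r ^ 2 / 2)))
      = Hfun n (Real.sqrt γ * R) := by
  set s := Real.sqrt γ with hs
  have hs0 : 0 < s := Real.sqrt_pos.2 hγ
  simp_rw [integrand_key n hn hγ]
  rw [← MeasureTheory.integral_Ioc_eq_integral_Ioo, ← intervalIntegral.integral_of_le hR]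
  have h1 : (∫ r in (0:ℝ)..R, s * psi n (s * r)) = s • ∫ r in (0:ℝ)..R, psi n (s * r) := by
    rw [intervalIntegral.integral_const_mul]; rfl
  rw [h1, intervalIntegral.smul_integral_comp_mul_left (psi n) s, mul_zero]
  rfl

lemma subst_Ioi (n : ℕ) (hn : 1 ≤ n) {γ : ℝ} (hγ : 0 < γ) :
    (∫ r in Ioi (0:ℝ), r ^ (n - 1) * (γ ^ ((n:ℝ)/2) * Real.exp (-γ * r ^ 2 / 2)))
      = ∫ u in Ioi (0:ℝ), psi n u := by
  set s := Real.sqrt γ with hs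
  have hs0 : 0 < s := Real.sqrt_pos.2 hγ
  simp_rw [integrand_key n hn hγ]
  rw [MeasureTheory.integral_const_mul, integral_comp_mul_left_Ioi (psi n) 0 hs0, mul_zero,
    smul_eq_mul, ← mul_assoc, mul_inv_cancel₀ hs0.ne', one_mul]

section Region

variable {n : ℕ}

local notation "E" => EuclideanSpace ℝ (Fin n)

lemma region_concave (hn : 1 ≤ n)
    (Ω : Set (EuclideanSpace ℝ (Fin n))) (hmeas : MeasurableSet Ω)
    (hstar : StarConvex ℝ (0 : EuclideanSpace ℝ (Fin n)) Ω)
    {dmin : ℝ} (hdmin : 0 < dmin)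
    (hball : Metric.closedBall (0 : EuclideanSpace ℝ (Fin n)) dmin ⊆ Ω) :
    ConcaveOn ℝ {γ : ℝ | 0 < γ ∧ ((n:ℝ) - 2) / dmin ^ 2 ≤ γ}
      (fun γ => ∫ x in Ω, (γ / (2 * π)) ^ ((n : ℝ) / 2) * Real.exp (-γ * ‖x‖ ^ 2 / 2)) := by
  have hnontriv : Nontrivial (EuclideanSpace ℝ (Fin n)) :=
    Module.nontrivial_of_finrank_pos (R := ℝ) (by rw [finrank_euclideanSpace_fin]; omega)
  have hdim : Module.finrank ℝ (EuclideanSpace ℝ (Fin n)) = n := finrank_euclideanSpace_fin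
  set D : Set ℝ := {γ : ℝ | 0 < γ ∧ ((n:ℝ) - 2) / dmin ^ 2 ≤ γ} with hDdef
  have hDconv : Convex ℝ D := convex_setD _
  set c₀ : ℝ := ((2 * π) ^ ((n:ℝ)/2))⁻¹ with hc₀
  have hc₀nonneg : 0 ≤ c₀ := by positivity
  have hsplit : ∀ {γ : ℝ}, 0 < γ → (γ / (2 * π)) ^ ((n : ℝ) / 2) = c₀ * γ ^ ((n:ℝ)/2) := by
    intro γ hγ
    rw [Real.div_rpow hγ.le (by positivity), hc₀]
    ring
  -- the radial sections
  set T : Metric.sphere (0 : EuclideanSpace ℝ (Fin n)) 1 → Set ℝ :=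
    fun θ => {r : ℝ | 0 < r ∧ r • (θ : EuclideanSpace ℝ (Fin n)) ∈ Ω} with hT
  have hTsub : ∀ θ, T θ ⊆ Ioi (0:ℝ) := fun θ r hr => hr.1
  have hTmeas : ∀ θ, MeasurableSet (T θ) := by
    intro θ
    have : T θ = Ioi (0:ℝ) ∩ (fun r : ℝ => r • (θ : EuclideanSpace ℝ (Fin n))) ⁻¹' Ω := by
      ext r; simp [hT, mem_Ioi]
    rw [this]
    exact measurableSet_Ioi.inter
      (((continuous_id.smul continuous_const).measurable) hmeas)
  have hTdown : ∀ θ, ∀ r ∈ T θ, ∀ u : ℝ, 0 < u → u ≤ r → u ∈ T θ := by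
    intro θ r hr u hu hur
    have hr0 : 0 < r := hr.1
    have h1 : (u / r) • (r • (θ : EuclideanSpace ℝ (Fin n))) ∈ Ω :=
      hstar.smul_mem hr.2 (by positivity) (by rw [div_le_one hr0]; exact hur)
    have h2 : (u / r) • (r • (θ : EuclideanSpace ℝ (Fin n)))
        = u • (θ : EuclideanSpace ℝ (Fin n)) := by
      rw [smul_smul, div_mul_cancel₀ _ hr0.ne']
    exact ⟨hu, h2 ▸ h1⟩
  have hnorm : ∀ θ : Metric.sphere (0 : EuclideanSpace ℝ (Fin n)) 1, ∀ r : ℝ, 0 ≤ r →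
      ‖r • (θ : EuclideanSpace ℝ (Fin n))‖ = r := by
    intro θ r hr
    rw [norm_smul, mem_sphere_zero_iff_norm.1 θ.2, Real.norm_eq_abs, abs_of_nonneg hr, mul_one]
  have hTball : ∀ θ, Ioc (0:ℝ) dmin ⊆ T θ := by
    intro θ r hr
    refine ⟨hr.1, hball ?_⟩
    rw [Metric.mem_closedBall, dist_zero_right, hnorm θ r hr.1.le]
    exact hr.2
  have hdmem : ∀ θ, dmin ∈ T θ := fun θ => hTball θ ⟨hdmin, le_refl _⟩
  -- the sliced functions
  set g : Metric.sphere (0 : EuclideanSpace ℝ (Fin n)) 1 → ℝ → ℝ :=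
    fun θ γ => ∫ r in T θ,
      r ^ (n - 1) * ((γ / (2 * π)) ^ ((n : ℝ) / 2) * Real.exp (-γ * r ^ 2 / 2)) with hg
  -- per-slice concavity
  have hgconc : ∀ θ, ConcaveOn ℝ D (g θ) := by
    intro θ
    have hpull : ∀ {γ : ℝ}, 0 < γ → g θ γ =
        c₀ * ∫ r in T θ, r ^ (n - 1) * (γ ^ ((n:ℝ)/2) * Real.exp (-γ * r ^ 2 / 2)) := by
      intro γ hγ
      rw [hg, ← MeasureTheory.integral_const_mul]
      refine integral_congr_ae (ae_of_all _ fun r => ?_)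
      rw [hsplit hγ]; ring
    by_cases hbdd : BddAbove (T θ)
    · set R := sSup (T θ) with hR
      have hRd : dmin ≤ R := le_csSup hbdd (hdmem θ)
      have hR0 : 0 < R := hdmin.trans_le hRd
      have hIoo : Ioo 0 R ⊆ T θ := by
        intro x hx
        obtain ⟨r, hrT, hxr⟩ := exists_lt_of_lt_csSup ⟨dmin, hdmem θ⟩ hx.2
        exact hTdown θ r hrT x hx.1 hxr.le
      have hsub2 : T θ ⊆ Ioc 0 R := fun r hr => ⟨hr.1, le_csSup hbdd hr⟩
      have hae : T θ =ᵐ[volume] Ioo 0 R := by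
        rw [MeasureTheory.ae_eq_set]
        constructor
        · refine measure_mono_null (fun r hr => ?_) (measure_singleton R)
          rcases hr with ⟨hr1, hr2⟩
          have := hsub2 hr1
          simp only [mem_Ioo, not_and, not_lt] at hr2
          have : r = R := le_antisymm this.2 (hr2 this.1)
          simpa using this
        · rw [diff_eq_empty.2 hIoo]; exact measure_empty
      refine concaveOn_congr (concave_scaled n hn hc₀nonneg hdmin hRd) (fun γ hγ => ?_)
      have hγ0 : 0 < γ := hγ.1
      rw [hpull hγ0, MeasureTheory.setIntegral_congr_set hae, subst_Ioo n hn hγ0 hR0.le]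
    · have hTeq : T θ = Ioi (0:ℝ) := by
        refine subset_antisymm (hTsub θ) (fun r hr => ?_)
        obtain ⟨x, hxT, hrx⟩ := not_bddAbove_iff.1 hbdd r
        exact hTdown θ x hxT r hr hrx.le
      refine concaveOn_congr
        (concaveOn_const (c₀ * ∫ u in Ioi (0:ℝ), psi n u) hDconv) (fun γ hγ => ?_)
      rw [hpull hγ.1, hTeq, subst_Ioi n hn hγ.1]
  -- representation of the full integral via slices
  have hrep : ∀ γ : ℝ, 0 < γ →
      ((∫ x in Ω, (γ / (2 * π)) ^ ((n : ℝ) / 2) * Real.exp (-γ * ‖x‖ ^ 2 / 2))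
        = ∫ θ, g θ γ ∂((volume : Measure (EuclideanSpace ℝ (Fin n))).toSphere))
      ∧ Integrable (fun θ => g θ γ)
          ((volume : Measure (EuclideanSpace ℝ (Fin n))).toSphere) := by
    intro γ hγ
    set fc : EuclideanSpace ℝ (Fin n) → ℝ :=
      fun x => (γ / (2 * π)) ^ ((n : ℝ) / 2) * Real.exp (-γ * ‖x‖ ^ 2 / 2) with hfc
    set fΩ := Ω.indicator fc with hfΩ
    have hfcint : Integrable fc := by
      have hg2 : Integrable (fun x : EuclideanSpace ℝ (Fin n) =>
          Real.exp (-(γ/2) * ‖x‖ ^ 2)) := by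
        have h := (GaussianFourier.integrable_cexp_neg_mul_sq_norm_add
          (V := EuclideanSpace ℝ (Fin n)) (b := ((γ/2 : ℝ) : ℂ))
          (by simpa using half_pos hγ) 0 0).norm
        refine h.congr (ae_of_all _ fun x => ?_)
        show ‖Complex.exp (-(((γ/2 : ℝ)) : ℂ) * ((‖x‖ : ℝ) : ℂ) ^ 2
            + 0 * ((inner ℝ (0 : EuclideanSpace ℝ (Fin n)) x : ℝ) : ℂ))‖ = _
        rw [zero_mul, add_zero,
          show (-(((γ/2 : ℝ)) : ℂ) * ((‖x‖:ℝ) : ℂ) ^ 2)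
              = ((-(γ/2) * ‖x‖ ^ 2 : ℝ) : ℂ) by push_cast; ring,
          Complex.norm_exp, Complex.ofReal_re]
      have heq : fc = fun x => ((γ / (2 * π)) ^ ((n : ℝ) / 2)) *
          Real.exp (-(γ/2) * ‖x‖ ^ 2) := by
        funext x
        show (γ / (2 * π)) ^ ((n:ℝ) / 2) * Real.exp (-γ * ‖x‖ ^ 2 / 2) = _
        rw [show -γ * ‖x‖ ^ 2 / 2 = -(γ/2) * ‖x‖ ^ 2 by ring]
      rw [heq]
      exact hg2.const_mul _
    have hfΩint : Integrable fΩ := hfcint.indicator hmeas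
    have hs0c : MeasurableSet ({(0 : EuclideanSpace ℝ (Fin n))}ᶜ) :=
      (measurableSet_singleton _).compl
    have step1 : (∫ x in Ω, fc x)
        = ∫ x : ({(0 : EuclideanSpace ℝ (Fin n))}ᶜ : Set _), fΩ x
          ∂((volume : Measure (EuclideanSpace ℝ (Fin n))).comap Subtype.val) := by
      rw [integral_subtype_comap hs0c, restrict_compl_singleton, hfΩ,
        integral_indicator hmeas]
    have mp := (volume :
      Measure (EuclideanSpace ℝ (Fin n))).measurePreserving_homeomorphUnitSphereProd
    rw [hdim] at mp
    have emb :=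
      (homeomorphUnitSphereProd (EuclideanSpace ℝ (Fin n))).measurableEmbedding
    have hcomp := mp.integral_comp emb
      (fun p : Metric.sphere (0 : EuclideanSpace ℝ (Fin n)) 1 × Ioi (0:ℝ) =>
        fΩ ((p.2 : ℝ) • (p.1 : EuclideanSpace ℝ (Fin n))))
    have hptwise : ∀ x : ({(0 : EuclideanSpace ℝ (Fin n))}ᶜ : Set _),
        fΩ (((homeomorphUnitSphereProd (EuclideanSpace ℝ (Fin n)) x).2 : ℝ) •
          ((homeomorphUnitSphereProd (EuclideanSpace ℝ (Fin n)) x).1 :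
            EuclideanSpace ℝ (Fin n))) = fΩ x := by
      intro x
      congr 1
      simp only [homeomorphUnitSphereProd_apply_fst_coe,
        homeomorphUnitSphereProd_apply_snd_coe]
      exact smul_inv_smul₀ (norm_ne_zero_iff.2 (Set.mem_compl_singleton_iff.1 x.2)) x.1
    have hint_sub : Integrable
        (fun x : ({(0 : EuclideanSpace ℝ (Fin n))}ᶜ : Set _) => fΩ x)
        ((volume : Measure (EuclideanSpace ℝ (Fin n))).comap Subtype.val) := by
      have h1 : Integrable fΩ
          (((volume : Measure (EuclideanSpace ℝ (Fin n))).comap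
            (Subtype.val : ({(0 : EuclideanSpace ℝ (Fin n))}ᶜ : Set _) →
              EuclideanSpace ℝ (Fin n))).map Subtype.val) := by
        rw [(MeasurableEmbedding.subtype_coe hs0c).map_comap, Subtype.range_coe,
          restrict_compl_singleton]
        exact hfΩint
      exact ((MeasurableEmbedding.subtype_coe hs0c).integrable_map_iff).1 h1
    have hint_prod : Integrable
        (fun p : Metric.sphere (0 : EuclideanSpace ℝ (Fin n)) 1 × Ioi (0:ℝ) =>
          fΩ ((p.2 : ℝ) • (p.1 : EuclideanSpace ℝ (Fin n))))
        (((volume : Measure (EuclideanSpace ℝ (Fin n))).toSphere).prod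
          (Measure.volumeIoiPow (n - 1))) := by
      rw [← mp.integrable_comp_emb emb]
      exact hint_sub.congr (ae_of_all _ fun x => (hptwise x).symm)
    have hfub := MeasureTheory.integral_prod _ hint_prod
    have hinner : ∀ θ : Metric.sphere (0 : EuclideanSpace ℝ (Fin n)) 1,
        (∫ r : Ioi (0:ℝ), fΩ ((r : ℝ) • (θ : EuclideanSpace ℝ (Fin n)))
          ∂(Measure.volumeIoiPow (n - 1))) = g θ γ := by
      intro θ
      rw [Measure.volumeIoiPow]
      simp only [ENNReal.ofReal]
      rw [integral_withDensity_eq_integral_smul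
          ((measurable_subtype_coe.pow_const _).real_toNNReal),
        integral_subtype_comap measurableSet_Ioi
          (fun r : ℝ => (r ^ (n - 1)).toNNReal •
            fΩ (r • (θ : EuclideanSpace ℝ (Fin n))))]
      have hcong : ∀ r ∈ Ioi (0:ℝ),
          (Real.toNNReal (r ^ (n - 1))) • fΩ (r • (θ : EuclideanSpace ℝ (Fin n)))
            = (T θ).indicator (fun r => r ^ (n - 1) *
                ((γ / (2 * π)) ^ ((n:ℝ)/2) * Real.exp (-γ * r ^ 2 / 2))) r := by
        intro r hr
        have hr0 : (0:ℝ) < r := hr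
        rw [NNReal.smul_def, Real.coe_toNNReal _ (pow_nonneg hr0.le _), smul_eq_mul]
        by_cases hmem : r • (θ : EuclideanSpace ℝ (Fin n)) ∈ Ω
        · have hrT : r ∈ T θ := ⟨hr0, hmem⟩
          rw [indicator_of_mem hrT, hfΩ, indicator_of_mem hmem]
          simp only [hfc]
          rw [hnorm θ r hr0.le]
        · have hrT : r ∉ T θ := fun h => hmem h.2
          rw [indicator_of_notMem hrT, hfΩ, indicator_of_notMem hmem, mul_zero]
      rw [setIntegral_congr_fun measurableSet_Ioi hcong,
        setIntegral_indicator (hTmeas θ),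
        inter_eq_self_of_subset_right (hTsub θ), hg]
    constructor
    · calc (∫ x in Ω, fc x)
          = ∫ x : ({(0 : EuclideanSpace ℝ (Fin n))}ᶜ : Set _), fΩ x
            ∂((volume : Measure (EuclideanSpace ℝ (Fin n))).comap Subtype.val) := step1
        _ = ∫ x : ({(0 : EuclideanSpace ℝ (Fin n))}ᶜ : Set _),
              fΩ (((homeomorphUnitSphereProd (EuclideanSpace ℝ (Fin n)) x).2 : ℝ) •
                ((homeomorphUnitSphereProd (EuclideanSpace ℝ (Fin n)) x).1 :
                  EuclideanSpace ℝ (Fin n)))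
            ∂((volume : Measure (EuclideanSpace ℝ (Fin n))).comap Subtype.val) :=
          (integral_congr_ae (ae_of_all _ fun x => (hptwise x).symm)).symm.symm
        _ = ∫ p : Metric.sphere (0 : EuclideanSpace ℝ (Fin n)) 1 × Ioi (0:ℝ),
              fΩ ((p.2 : ℝ) • (p.1 : EuclideanSpace ℝ (Fin n)))
            ∂(((volume : Measure (EuclideanSpace ℝ (Fin n))).toSphere).prod
              (Measure.volumeIoiPow (n - 1))) := hcomp
        _ = ∫ θ, (∫ r : Ioi (0:ℝ), fΩ ((r : ℝ) • (θ : EuclideanSpace ℝ (Fin n)))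
              ∂(Measure.volumeIoiPow (n - 1)))
            ∂((volume : Measure (EuclideanSpace ℝ (Fin n))).toSphere) := hfub
        _ = ∫ θ, g θ γ ∂((volume : Measure (EuclideanSpace ℝ (Fin n))).toSphere) :=
          integral_congr_ae (ae_of_all _ fun θ => hinner θ)
    · exact (hint_prod.integral_prod_left).congr (ae_of_all _ hinner)
  -- final assembly
  refine ⟨hDconv, fun γ₁ h₁ γ₂ h₂ a b ha hb hab => ?_⟩
  have h₃ : a • γ₁ + b • γ₂ ∈ D := hDconv h₁ h₂ ha hb hab
  obtain ⟨e₁, i₁⟩ := hrep γ₁ h₁.1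
  obtain ⟨e₂, i₂⟩ := hrep γ₂ h₂.1
  obtain ⟨e₃, i₃⟩ := hrep _ h₃.1
  dsimp only
  rw [e₁, e₂, e₃]
  simp only [smul_eq_mul]
  rw [← MeasureTheory.integral_const_mul, ← MeasureTheory.integral_const_mul,
    ← integral_add (i₁.const_mul a) (i₂.const_mul b)]
  refine integral_mono ((i₁.const_mul a).add (i₂.const_mul b)) i₃ fun θ => ?_
  have h4 := (hgconc θ).2 h₁ h₂ ha hb hab
  simpa [smul_eq_mul] using h4

end Region

end SerAux

/-- In the AWGN channel, the SER of a decoder with center-convex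
decision regions is convex in the SNR `γ` on `{γ | 0 < γ ∧ (n-2)/d_min² ≤ γ}`;
in particular, for `n ≤ 2` it is convex on all of `(0, ∞)`. -/
theorem ser_convex_in_snr_awgn
    (n M : ℕ) (hn : 1 ≤ n)
    (q : Fin M → ℝ) (hq : ∀ i, 0 ≤ q i) (hqsum : ∑ i, q i = 1)
    (Ω : Fin M → Set (EuclideanSpace ℝ (Fin n)))
    (hΩmeas : ∀ i, MeasurableSet (Ω i))
    (hΩstar : ∀ i, StarConvex ℝ (0 : EuclideanSpace ℝ (Fin n)) (Ω i))
    (dmin : ℝ) (hdmin : 0 < dmin)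
    (hball : ∀ i, Metric.closedBall (0 : EuclideanSpace ℝ (Fin n)) dmin ⊆ Ω i)
    (Pe : ℝ → ℝ)
    (hPe : ∀ γ, Pe γ =
      1 - ∑ i, q i * ∫ x in Ω i,
        (γ / (2 * π)) ^ ((n : ℝ) / 2) * Real.exp (-γ * ‖x‖ ^ 2 / 2)) :
    ConvexOn ℝ {γ : ℝ | 0 < γ ∧ ((n : ℝ) - 2) / dmin ^ 2 ≤ γ} Pe ∧
      (n ≤ 2 → ConvexOn ℝ (Ioi (0 : ℝ)) Pe) := by
  set D : Set ℝ := {γ : ℝ | 0 < γ ∧ ((n : ℝ) - 2) / dmin ^ 2 ≤ γ} with hD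
  have hDconv : Convex ℝ D := SerAux.convex_setD _
  have hPe' : Pe = (fun _ => (1:ℝ)) - (fun γ => ∑ i, q i * ∫ x in Ω i,
      (γ / (2 * π)) ^ ((n : ℝ) / 2) * Real.exp (-γ * ‖x‖ ^ 2 / 2)) := by
    funext γ; rw [hPe γ]; rfl
  have hsum : ConcaveOn ℝ D (fun γ => ∑ i, q i * ∫ x in Ω i,
      (γ / (2 * π)) ^ ((n : ℝ) / 2) * Real.exp (-γ * ‖x‖ ^ 2 / 2)) := by
    have hfun : (fun γ => ∑ i, q i * ∫ x in Ω i,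
        (γ / (2 * π)) ^ ((n : ℝ) / 2) * Real.exp (-γ * ‖x‖ ^ 2 / 2))
        = ∑ i : Fin M, (fun γ => q i * ∫ x in Ω i,
          (γ / (2 * π)) ^ ((n : ℝ) / 2) * Real.exp (-γ * ‖x‖ ^ 2 / 2)) := by
      funext γ; rw [Finset.sum_apply]
    rw [hfun]
    refine Finset.sum_induction _ (fun f => ConcaveOn ℝ D f)
      (fun f g hf hg => hf.add hg) ?_ (fun i _ => ?_)
    · exact concaveOn_const 0 hDconv
    · have hi := SerAux.region_concave hn (Ω i) (hΩmeas i) (hΩstar i) hdmin (hball i)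
      have h2 := hi.smul (hq i)
      refine SerAux.concaveOn_congr h2 (fun γ _ => ?_)
      simp [smul_eq_mul]
  have main : ConvexOn ℝ D Pe := by
    rw [hPe']
    exact (convexOn_const 1 hDconv).sub hsum
  refine ⟨main, fun hn2 => ?_⟩
  have hc : ((n:ℝ) - 2) / dmin ^ 2 ≤ 0 :=
    div_nonpos_of_nonpos_of_nonneg
      (sub_nonpos.2 (by exact_mod_cast hn2)) (sq_nonneg dmin)
  exact main.subset (fun γ hγ => ⟨hγ, hc.trans (le_of_lt hγ)⟩) (convex_Ioi 0)
end

section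
/- Let n ≥ 3 and let P_e be the symbol error rate of a decoder with center-convex decision regions in the AWGN channel, i.e. P_e(γ) = 1 − Σ_{i=1}^{M} q_i ∫_{Ω_i} (γ/(2π))^{n/2} exp(−γ‖x‖²/2) dx for SNR γ > 0. If Ω_i ⊆ Metric.closedBall 0 d_max for every i with d_max > 0, then P_e is concave on the interval (0, (n−2)/d_max²]. -/
set_option maxHeartbeats 1000000

open MeasureTheory Real Set intervalIntegral Metric


noncomputable def serK (n : ℕ) (ρ : ℝ) (γ : ℝ) : ℝ :=
  ∫ u in (0:ℝ)..(ρ * Real.sqrt γ), u ^ (n-1) * Real.exp (-u^2/2)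

noncomputable def serD (n : ℕ) (ρ : ℝ) (γ : ℝ) : ℝ :=
  ρ ^ n / 2 * (γ ^ (((n:ℝ)-2)/2) * Real.exp (-(ρ^2/2) * γ))

lemma serK_hasDerivAt (n : ℕ) (hn : 3 ≤ n) (ρ : ℝ) (hρ0 : 0 ≤ ρ) {γ : ℝ} (hγ : 0 < γ) :
    HasDerivAt (serK n ρ) (serD n ρ γ) γ := by
  have hcont : Continuous (fun u : ℝ => u ^ (n-1) * Real.exp (-u^2/2)) := by
    fun_prop
  have hH : ∀ t : ℝ, HasDerivAt (fun t : ℝ => ∫ u in (0:ℝ)..t, u ^ (n-1) * Real.exp (-u^2/2))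
      (t ^ (n-1) * Real.exp (-t^2/2)) t := by
    intro t
    exact intervalIntegral.integral_hasDerivAt_right (hcont.intervalIntegrable _ _)
      (hcont.stronglyMeasurableAtFilter _ _) hcont.continuousAt
  have hφ : HasDerivAt (fun γ : ℝ => ρ * Real.sqrt γ) (ρ * (1 / (2 * Real.sqrt γ))) γ :=
    (Real.hasDerivAt_sqrt hγ.ne').const_mul ρ
  have h := (hH (ρ * Real.sqrt γ)).comp γ hφ
  refine h.congr_deriv (Eq.symm ?_)
  have hsγ : 0 < Real.sqrt γ := Real.sqrt_pos.2 hγ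
  have h1 : (ρ * Real.sqrt γ) ^ 2 = ρ ^ 2 * γ := by
    rw [mul_pow, Real.sq_sqrt hγ.le]
  have h2 : (Real.sqrt γ : ℝ) ^ (n-2) = γ ^ (((n:ℝ)-2)/2) := by
    rw [← Real.rpow_natCast (Real.sqrt γ) (n-2), Real.sqrt_eq_rpow, ← Real.rpow_mul hγ.le]
    congr 1
    rw [Nat.cast_sub (by omega)]
    push_cast; ring
  rw [serD, ← h2, h1]
  have hn1 : n - 1 = (n-2) + 1 := by omega
  have hn2 : n = (n-1) + 1 := by omega
  rw [mul_pow]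
  field_simp
  rw [mul_comm]
  rw [hn1]
  ring_nf
  have : ρ ^ n = ρ ^ 2 * ρ ^ (n-2) := by rw [← pow_add]; congr 1; omega
  rw [this]; ring

lemma serD_hasDerivAt (n : ℕ) (ρ : ℝ) {γ : ℝ} (hγ : 0 < γ) :
    HasDerivAt (serD n ρ)
      (ρ ^ n / 2 * ((((n:ℝ)-2)/2) * γ ^ ((((n:ℝ)-2)/2) - 1) * Real.exp (-(ρ^2/2) * γ)
        + γ ^ (((n:ℝ)-2)/2) * (Real.exp (-(ρ^2/2) * γ) * (-(ρ^2/2))))) γ := by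
  have h1 : HasDerivAt (fun γ : ℝ => γ ^ (((n:ℝ)-2)/2))
      ((((n:ℝ)-2)/2) * γ ^ ((((n:ℝ)-2)/2) - 1)) γ :=
    Real.hasDerivAt_rpow_const (Or.inl hγ.ne')
  have h2 : HasDerivAt (fun γ : ℝ => Real.exp (-(ρ^2/2) * γ))
      (Real.exp (-(ρ^2/2) * γ) * (-(ρ^2/2))) γ := by
    have := ((hasDerivAt_id γ).const_mul (-(ρ^2/2))).exp
    simpa [mul_comm] using this
  exact (h1.mul h2).const_mul _

lemma serD_monotoneOn (n : ℕ) (hn : 3 ≤ n) (ρ dmax : ℝ) (hρ0 : 0 ≤ ρ) (hρ : ρ ≤ dmax)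
    (hdmax : 0 < dmax) :
    MonotoneOn (serD n ρ) (Ioo 0 (((n:ℝ)-2)/dmax^2)) := by
  have hn2 : (0:ℝ) < (n:ℝ) - 2 := by
    have : (3:ℝ) ≤ (n:ℝ) := by exact_mod_cast hn
    linarith
  apply monotoneOn_of_deriv_nonneg (convex_Ioo _ _)
  · intro γ hγ
    exact (serD_hasDerivAt n ρ hγ.1).continuousAt.continuousWithinAt
  · rw [interior_Ioo]
    intro γ hγ
    exact (serD_hasDerivAt n ρ hγ.1).differentiableAt.differentiableWithinAt
  · rw [interior_Ioo]
    intro γ hγ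
    rw [(serD_hasDerivAt n ρ hγ.1).deriv]
    have hγ0 := hγ.1
    have hγc := hγ.2
    set p : ℝ := ((n:ℝ)-2)/2 with hp
    have key : γ ^ p = γ ^ (p - 1) * γ := by
      have h := Real.rpow_add_one hγ0.ne' (p-1)
      rw [sub_add_cancel] at h
      exact h
    have hρ2γ : ρ^2/2 * γ ≤ p := by
      have h1 : ρ^2 ≤ dmax^2 := by nlinarith
      have h2 : γ ≤ ((n:ℝ)-2)/dmax^2 := hγc.le
      have h3 : ρ^2 * γ ≤ dmax^2 * (((n:ℝ)-2)/dmax^2) := by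
        apply mul_le_mul h1 h2 hγ0.le (by positivity)
      rw [mul_div_cancel₀ _ (by positivity : (dmax:ℝ)^2 ≠ 0)] at h3
      rw [hp]; linarith
    have hpow : (0:ℝ) ≤ γ ^ (p-1) := (Real.rpow_nonneg hγ0.le _)
    have hexp : (0:ℝ) < Real.exp (-(ρ^2/2) * γ) := Real.exp_pos _
    have : p * γ ^ (p - 1) * Real.exp (-(ρ^2/2) * γ)
        + γ ^ p * (Real.exp (-(ρ^2/2) * γ) * (-(ρ^2/2)))
        = γ ^ (p-1) * Real.exp (-(ρ^2/2) * γ) * (p - ρ^2/2 * γ) := by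
      rw [key]; ring
    rw [this]
    apply mul_nonneg (by positivity)
    exact mul_nonneg (mul_nonneg hpow hexp.le) (by linarith)

lemma serK_convexOn (n : ℕ) (hn : 3 ≤ n) (ρ dmax : ℝ) (hρ0 : 0 ≤ ρ) (hρ : ρ ≤ dmax)
    (hdmax : 0 < dmax) :
    ConvexOn ℝ (Ioc 0 (((n:ℝ)-2)/dmax^2)) (serK n ρ) := by
  apply MonotoneOn.convexOn_of_deriv (convex_Ioc _ _)
  · intro γ hγ
    exact (serK_hasDerivAt n hn ρ hρ0 hγ.1).continuousAt.continuousWithinAt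
  · rw [interior_Ioc]
    intro γ hγ
    exact (serK_hasDerivAt n hn ρ hρ0 hγ.1).differentiableAt.differentiableWithinAt
  · rw [interior_Ioc]
    intro x hx y hy hxy
    rw [(serK_hasDerivAt n hn ρ hρ0 hx.1).deriv, (serK_hasDerivAt n hn ρ hρ0 hy.1).deriv]
    exact serD_monotoneOn n hn ρ dmax hρ0 hρ hdmax hx hy hxy


noncomputable def serRho {E : Type*} [NormedAddCommGroup E] [NormedSpace ℝ E]
    (Ω : Set E) (θ : E) : ℝ := sSup {r : ℝ | 0 < r ∧ r • θ ∈ Ω}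

section rho
variable {E : Type*} [NormedAddCommGroup E] [NormedSpace ℝ E]
  {Ω : Set E} {θ : E} {dmax : ℝ}

lemma serRho_nonneg : 0 ≤ serRho Ω θ :=
  Real.sSup_nonneg (fun r hr => hr.1.le)

lemma serRho_le (hθ : ‖θ‖ = 1) (hball : Ω ⊆ Metric.closedBall 0 dmax) (hdmax : 0 ≤ dmax) :
    serRho Ω θ ≤ dmax := by
  apply Real.sSup_le _ hdmax
  intro r hr
  have h := hball hr.2
  rwa [mem_closedBall_zero_iff, norm_smul, hθ, mul_one, Real.norm_eq_abs,
    abs_of_pos hr.1] at h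

lemma le_serRho (hθ : ‖θ‖ = 1) (hball : Ω ⊆ Metric.closedBall 0 dmax)
    {r : ℝ} (hr : 0 < r) (hmem : r • θ ∈ Ω) : r ≤ serRho Ω θ := by
  refine le_csSup ⟨dmax, fun s hs => ?_⟩ ⟨hr, hmem⟩
  have h := hball hs.2
  rwa [mem_closedBall_zero_iff, norm_smul, hθ, mul_one, Real.norm_eq_abs,
    abs_of_pos hs.1] at h

lemma mem_of_lt_serRho (hstar : StarConvex ℝ 0 Ω) {r : ℝ} (hr : 0 < r)
    (hlt : r < serRho Ω θ) : r • θ ∈ Ω := by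
  have hne : {s : ℝ | 0 < s ∧ s • θ ∈ Ω}.Nonempty := by
    by_contra h
    rw [not_nonempty_iff_eq_empty] at h
    rw [serRho, h, Real.sSup_empty] at hlt
    linarith
  obtain ⟨s, hs, hrs⟩ := exists_lt_of_lt_csSup hne hlt
  have hs0 : 0 < s := hs.1
  have : (r / s) • (s • θ) ∈ Ω :=
    hstar.smul_mem hs.2 (by positivity) (by rw [div_le_one hs0]; linarith)
  rwa [smul_smul, div_mul_cancel₀ _ hs0.ne'] at this

end rho

lemma sub_calc (n : ℕ) (hn : 3 ≤ n) (ρ : ℝ) (hρ0 : 0 ≤ ρ) (γ : ℝ) (hγ : 0 < γ) :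
    ∫ r in (0:ℝ)..ρ, r^(n-1) * ((γ/(2*π))^((n:ℝ)/2) * Real.exp (-γ*r^2/2))
      = (2*π)^(-(n:ℝ)/2) * serK n ρ γ := by
  have hs : 0 < Real.sqrt γ := Real.sqrt_pos.2 hγ
  have hsn : (0:ℝ) < (Real.sqrt γ)^(n-1) := pow_pos hs _
  have h2π : (0:ℝ) < 2*π := by positivity
  set C := (γ/(2*π))^((n:ℝ)/2) with hC
  have key : C * ((Real.sqrt γ)^(n-1))⁻¹ * (Real.sqrt γ)⁻¹ = (2*π)^(-(n:ℝ)/2) := by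
    have h1 : (Real.sqrt γ)^(n-1) * Real.sqrt γ = (Real.sqrt γ)^n := by
      rw [← pow_succ]; congr 1; omega
    have h2 : (Real.sqrt γ)^n = γ^((n:ℝ)/2) := by
      rw [← Real.rpow_natCast (Real.sqrt γ) n, Real.sqrt_eq_rpow, ← Real.rpow_mul hγ.le]
      congr 1; ring
    have h3 : C = γ^((n:ℝ)/2) / (2*π)^((n:ℝ)/2) := by
      rw [hC, Real.div_rpow hγ.le h2π.le]
    have h4 : (0:ℝ) < γ^((n:ℝ)/2) := Real.rpow_pos_of_pos hγ _
    have h5 : (0:ℝ) < (2*π)^((n:ℝ)/2) := Real.rpow_pos_of_pos h2π _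
    rw [mul_assoc, ← mul_inv, h1, h2, h3, neg_div, Real.rpow_neg h2π.le]
    field_simp
  calc ∫ r in (0:ℝ)..ρ, r^(n-1) * (C * Real.exp (-γ*r^2/2))
      = ∫ r in (0:ℝ)..ρ, (C * ((Real.sqrt γ)^(n-1))⁻¹) *
          ((Real.sqrt γ * r)^(n-1) * Real.exp (-(Real.sqrt γ * r)^2/2)) := by
        apply intervalIntegral.integral_congr
        intro r _
        have he : (Real.sqrt γ * r)^2 = γ * r^2 := by
          rw [mul_pow, Real.sq_sqrt hγ.le]
        dsimp only
        rw [he, mul_pow]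
        field_simp
    _ = (C * ((Real.sqrt γ)^(n-1))⁻¹) *
          ∫ r in (0:ℝ)..ρ, (fun u => u^(n-1) * Real.exp (-u^2/2)) (Real.sqrt γ * r) :=
        intervalIntegral.integral_const_mul _ _
    _ = (C * ((Real.sqrt γ)^(n-1))⁻¹) * ((Real.sqrt γ)⁻¹ •
          ∫ u in (Real.sqrt γ * 0)..(Real.sqrt γ * ρ), u^(n-1) * Real.exp (-u^2/2)) := by
        rw [intervalIntegral.integral_comp_mul_left
          (fun u => u^(n-1) * Real.exp (-u^2/2)) hs.ne']
    _ = (2*π)^(-(n:ℝ)/2) * serK n ρ γ := by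
        rw [smul_eq_mul, serK, mul_zero, mul_comm (Real.sqrt γ) ρ, ← key]
        ring

lemma inner_eq {E : Type*} [NormedAddCommGroup E] [NormedSpace ℝ E]
    (n : ℕ) (hn : 3 ≤ n) (Ω : Set E) (hstar : StarConvex ℝ 0 Ω)
    (dmax : ℝ) (hdmax : 0 < dmax) (hball : Ω ⊆ Metric.closedBall 0 dmax)
    (θ : E) (hθ : ‖θ‖ = 1) (γ : ℝ) (hγ : 0 < γ) :
    (∫ r : Ioi (0:ℝ), Ω.indicator
        (fun x => (γ/(2*π)) ^ ((n:ℝ)/2) * Real.exp (-γ * ‖x‖^2/2)) ((r:ℝ) • θ)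
      ∂(Measure.volumeIoiPow (n-1)))
    = (2*π)^(-(n:ℝ)/2) * serK n (serRho Ω θ) γ := by
  have hρ0 : 0 ≤ serRho Ω θ := serRho_nonneg
  set ρ := serRho Ω θ with hρdef
  set f : E → ℝ := fun x => (γ/(2*π)) ^ ((n:ℝ)/2) * Real.exp (-γ * ‖x‖^2/2) with hfdef
  have step1 : (∫ r : Ioi (0:ℝ), Ω.indicator f ((r:ℝ) • θ) ∂(Measure.volumeIoiPow (n-1)))
      = ∫ r in Ioi (0:ℝ),
          Real.toNNReal (r^(n-1)) • Ω.indicator f (r • θ) ∂(volume : Measure ℝ) := by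
    simp only [Measure.volumeIoiPow, ENNReal.ofReal]
    rw [integral_withDensity_eq_integral_smul
        ((measurable_subtype_coe.pow_const _).real_toNNReal),
      integral_subtype_comap measurableSet_Ioi
        (fun r : ℝ => Real.toNNReal (r^(n-1)) • Ω.indicator f (r • θ))]
  have step2 : (∫ r in Ioi (0:ℝ),
        Real.toNNReal (r^(n-1)) • Ω.indicator f (r • θ) ∂(volume : Measure ℝ))
      = ∫ r in Ioi (0:ℝ), (Ioc (0:ℝ) ρ).indicator
          (fun s => s^(n-1) * ((γ/(2*π)) ^ ((n:ℝ)/2) * Real.exp (-γ * s^2/2))) r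
          ∂(volume : Measure ℝ) := by
    apply MeasureTheory.integral_congr_ae
    have h1 : ∀ᵐ (r : ℝ) ∂(volume : Measure ℝ), r ≠ ρ := by
      simpa [ae_iff, not_not, setOf_eq_eq_singleton] using
        (measure_singleton (μ := (volume : Measure ℝ)) ρ)
    filter_upwards [ae_restrict_mem measurableSet_Ioi, ae_restrict_of_ae h1] with r hr hne
    rw [NNReal.smul_def, Real.coe_toNNReal _ (pow_nonneg (le_of_lt hr) _)]
    have hnorm : ‖r • θ‖^2 = r^2 := by
      rw [norm_smul, hθ, mul_one, Real.norm_eq_abs, sq_abs]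
    by_cases hmem : r • θ ∈ Ω
    · have hle : r ≤ ρ := le_serRho hθ hball hr hmem
      rw [Set.indicator_of_mem hmem, Set.indicator_of_mem (mem_Ioc.mpr ⟨hr, hle⟩)]
      simp only [smul_eq_mul, hfdef]
      rw [hnorm]
    · have hnotmem : r ∉ Ioc (0:ℝ) ρ := fun h =>
        hmem (mem_of_lt_serRho hstar hr (lt_of_le_of_ne h.2 hne))
      rw [Set.indicator_of_notMem hmem, Set.indicator_of_notMem hnotmem, smul_zero]
  rw [step1, step2, MeasureTheory.integral_indicator measurableSet_Ioc,
    Measure.restrict_restrict measurableSet_Ioc,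
    inter_eq_self_of_subset_left Ioc_subset_Ioi_self,
    ← intervalIntegral.integral_of_le hρ0]
  exact sub_calc n hn ρ hρ0 γ hγ


lemma polar_repr {E : Type*} [NormedAddCommGroup E] [NormedSpace ℝ E] [MeasurableSpace E]
    [BorelSpace E] [FiniteDimensional ℝ E] [Nontrivial E] (μ : Measure E) [μ.IsAddHaarMeasure]
    (g : E → ℝ) (hg : Integrable g μ) :
    (∫ x, g x ∂μ) = (∫ θ : Metric.sphere (0:E) 1, ∫ r : Ioi (0:ℝ),
        g ((r:ℝ) • (θ:E)) ∂(Measure.volumeIoiPow (Module.finrank ℝ E - 1)) ∂μ.toSphere)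
    ∧ Integrable (fun θ : Metric.sphere (0:E) 1 => ∫ r : Ioi (0:ℝ),
        g ((r:ℝ) • (θ:E)) ∂(Measure.volumeIoiPow (Module.finrank ℝ E - 1))) μ.toSphere := by
  have hcompl : MeasurableSet ({0}ᶜ : Set E) := (measurableSet_singleton _).compl
  set Φ : Metric.sphere (0:E) 1 × Ioi (0:ℝ) → ℝ :=
    fun p => g ((p.2 : ℝ) • (p.1 : E)) with hΦ
  have hmp := μ.measurePreserving_homeomorphUnitSphereProd
  have hcomp : ∀ x : ({0}ᶜ : Set E), Φ (homeomorphUnitSphereProd E x) = g x.1 := by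
    intro x
    have hx : (x : E) ≠ 0 := x.2
    simp only [hΦ, homeomorphUnitSphereProd_apply_snd_coe,
      homeomorphUnitSphereProd_apply_fst_coe, smul_smul]
    rw [mul_inv_cancel₀ (norm_ne_zero_iff.2 hx), one_smul]
  have hgsub : Integrable (fun x : ({0}ᶜ : Set E) => g x.1) (μ.comap Subtype.val) := by
    have h2 : Integrable g ((μ.comap Subtype.val).map (Subtype.val : ({0}ᶜ : Set E) → E)) := by
      rw [map_comap_subtype_coe hcompl, restrict_compl_singleton]
      exact hg
    exact (MeasurableEmbedding.subtype_coe hcompl).integrable_map_iff.1 h2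
  have hΦint : Integrable Φ
      ((μ.toSphere).prod (Measure.volumeIoiPow (Module.finrank ℝ E - 1))) := by
    rw [← hmp.integrable_comp_emb (Homeomorph.measurableEmbedding _)]
    exact hgsub.congr (Filter.Eventually.of_forall fun x => (hcomp x).symm)
  constructor
  · calc ∫ x, g x ∂μ
        = ∫ x : ({0}ᶜ : Set E), g x.1 ∂(μ.comap Subtype.val) := by
          rw [integral_subtype_comap hcompl g, restrict_compl_singleton]
      _ = ∫ x : ({0}ᶜ : Set E), Φ (homeomorphUnitSphereProd E x) ∂(μ.comap Subtype.val) :=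
          integral_congr_ae (Filter.Eventually.of_forall fun x => (hcomp x).symm)
      _ = ∫ p, Φ p ∂((μ.toSphere).prod (Measure.volumeIoiPow (Module.finrank ℝ E - 1))) :=
          hmp.integral_comp (Homeomorph.measurableEmbedding _) Φ
      _ = _ := MeasureTheory.integral_prod Φ hΦint
  · exact hΦint.integral_prod_left

lemma Fi_convexOn (n : ℕ) (hn : 3 ≤ n) (Ω : Set (EuclideanSpace ℝ (Fin n)))
    (hmeas : MeasurableSet Ω) (hstar : StarConvex ℝ 0 Ω) (dmax : ℝ) (hdmax : 0 < dmax)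
    (hball : Ω ⊆ Metric.closedBall 0 dmax) :
    ConvexOn ℝ (Ioc (0:ℝ) (((n:ℝ)-2)/dmax^2))
      (fun γ => ∫ x in Ω, (γ/(2*π)) ^ ((n:ℝ)/2) * Real.exp (-γ * ‖x‖^2/2)) := by
  haveI : Nontrivial (EuclideanSpace ℝ (Fin n)) :=
    Module.nontrivial_of_finrank_pos (R := ℝ)
      (by rw [finrank_euclideanSpace_fin]; omega)
  set ν := (volume : Measure (EuclideanSpace ℝ (Fin n))).toSphere with hν
  have hfin : Module.finrank ℝ (EuclideanSpace ℝ (Fin n)) = n := finrank_euclideanSpace_fin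
  have hrep : ∀ γ : ℝ, 0 < γ →
      ((∫ x in Ω, (γ/(2*π)) ^ ((n:ℝ)/2) * Real.exp (-γ * ‖x‖^2/2)) =
        ∫ θ : Metric.sphere (0 : EuclideanSpace ℝ (Fin n)) 1,
          (2*π)^(-(n:ℝ)/2) * serK n (serRho Ω (θ : EuclideanSpace ℝ (Fin n))) γ ∂ν)
      ∧ Integrable (fun θ : Metric.sphere (0 : EuclideanSpace ℝ (Fin n)) 1 =>
          (2*π)^(-(n:ℝ)/2) * serK n (serRho Ω (θ : EuclideanSpace ℝ (Fin n))) γ) ν := by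
    intro γ hγ
    set f : EuclideanSpace ℝ (Fin n) → ℝ :=
      fun x => (γ/(2*π)) ^ ((n:ℝ)/2) * Real.exp (-γ * ‖x‖^2/2) with hf
    have hfc : Continuous f :=
      continuous_const.mul (Real.continuous_exp.comp
        ((continuous_const.mul (continuous_norm.pow 2)).div_const 2 : Continuous fun x : EuclideanSpace ℝ (Fin n) => -γ * ‖x‖^2 / 2))
    have hio : IntegrableOn f Ω (volume : Measure (EuclideanSpace ℝ (Fin n))) := by
      apply Measure.integrableOn_of_bounded (M := (γ/(2*π)) ^ ((n:ℝ)/2))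
      · exact ne_of_lt (lt_of_le_of_lt (measure_mono hball) measure_closedBall_lt_top)
      · exact hfc.aestronglyMeasurable
      · filter_upwards with x
        rw [hf, Real.norm_eq_abs, abs_of_nonneg (by positivity)]
        nth_rewrite 2 [← mul_one ((γ/(2*π)) ^ ((n:ℝ)/2))]
        apply mul_le_mul_of_nonneg_left _ (by positivity)
        exact Real.exp_le_one_iff.2 (by nlinarith [sq_nonneg ‖x‖])
    have hgint : Integrable (Ω.indicator f) :=
      (integrable_indicator_iff hmeas).2 hio
    obtain ⟨he, hi⟩ := polar_repr (volume : Measure (EuclideanSpace ℝ (Fin n)))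
      (Ω.indicator f) hgint
    rw [hfin] at he hi
    have hptwise : ∀ θ : Metric.sphere (0 : EuclideanSpace ℝ (Fin n)) 1,
        (∫ r : Ioi (0:ℝ), Ω.indicator f ((r:ℝ) • (θ : EuclideanSpace ℝ (Fin n)))
          ∂(Measure.volumeIoiPow (n-1)))
        = (2*π)^(-(n:ℝ)/2) * serK n (serRho Ω (θ : EuclideanSpace ℝ (Fin n))) γ :=
      fun θ => inner_eq n hn Ω hstar dmax hdmax hball _
        (mem_sphere_zero_iff_norm.1 θ.2) γ hγ
    constructor
    · rw [← MeasureTheory.integral_indicator hmeas, he]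
      exact MeasureTheory.integral_congr_ae (Filter.Eventually.of_forall hptwise)
    · exact hi.congr (Filter.Eventually.of_forall hptwise)
  have hc0 : (0:ℝ) ≤ (2*π)^(-(n:ℝ)/2) := Real.rpow_nonneg (by positivity) _
  refine ⟨convex_Ioc _ _, ?_⟩
  intro γ1 h1 γ2 h2 a b ha hb hab
  have h3 : a • γ1 + b • γ2 ∈ Ioc (0:ℝ) (((n:ℝ)-2)/dmax^2) :=
    (convex_Ioc _ _) h1 h2 ha hb hab
  simp only [smul_eq_mul] at h3
  dsimp only
  simp only [smul_eq_mul]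
  rw [(hrep _ h3.1).1, (hrep _ h1.1).1, (hrep _ h2.1).1]
  have key : ∀ θ : Metric.sphere (0 : EuclideanSpace ℝ (Fin n)) 1,
      (2*π)^(-(n:ℝ)/2) * serK n (serRho Ω (θ : EuclideanSpace ℝ (Fin n))) (a * γ1 + b * γ2)
      ≤ a * ((2*π)^(-(n:ℝ)/2) * serK n (serRho Ω (θ : EuclideanSpace ℝ (Fin n))) γ1)
        + b * ((2*π)^(-(n:ℝ)/2) * serK n (serRho Ω (θ : EuclideanSpace ℝ (Fin n))) γ2) := by
    intro θ
    have hρ0 : 0 ≤ serRho Ω (θ : EuclideanSpace ℝ (Fin n)) := serRho_nonneg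
    have hρle : serRho Ω (θ : EuclideanSpace ℝ (Fin n)) ≤ dmax :=
      serRho_le (mem_sphere_zero_iff_norm.1 θ.2) hball hdmax.le
    have hcv := (serK_convexOn n hn _ dmax hρ0 hρle hdmax).2 h1 h2 ha hb hab
    simp only [smul_eq_mul] at hcv
    linarith [mul_le_mul_of_nonneg_left hcv hc0]
  calc (∫ θ : Metric.sphere (0 : EuclideanSpace ℝ (Fin n)) 1,
        (2*π)^(-(n:ℝ)/2) * serK n (serRho Ω (θ : EuclideanSpace ℝ (Fin n)))
          (a * γ1 + b * γ2) ∂ν)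
      ≤ ∫ θ : Metric.sphere (0 : EuclideanSpace ℝ (Fin n)) 1,
          (a * ((2*π)^(-(n:ℝ)/2) * serK n (serRho Ω (θ : EuclideanSpace ℝ (Fin n))) γ1)
          + b * ((2*π)^(-(n:ℝ)/2) * serK n (serRho Ω (θ : EuclideanSpace ℝ (Fin n))) γ2)) ∂ν := by
        apply MeasureTheory.integral_mono ((hrep _ h3.1).2)
          (((hrep _ h1.1).2.const_mul a).add ((hrep _ h2.1).2.const_mul b)) key
    _ = _ := by
        rw [MeasureTheory.integral_add ((hrep _ h1.1).2.const_mul a)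
            ((hrep _ h2.1).2.const_mul b)]
        simp only [MeasureTheory.integral_const_mul]


/-- In the AWGN channel with `n ≥ 3`, the SER of a decoder with
center-convex decision regions contained in the ball of radius `d_max` is
concave in the SNR on the interval `(0, (n-2)/d_max²]`. -/
theorem ser_concave_low_snr_awgn
    (n M : ℕ) (hn : 3 ≤ n)
    (q : Fin M → ℝ) (hq : ∀ i, 0 ≤ q i) (hqsum : ∑ i, q i = 1)
    (Ω : Fin M → Set (EuclideanSpace ℝ (Fin n)))
    (hΩmeas : ∀ i, MeasurableSet (Ω i))
    (hΩstar : ∀ i, StarConvex ℝ (0 : EuclideanSpace ℝ (Fin n)) (Ω i))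
    (dmax : ℝ) (hdmax : 0 < dmax)
    (hball : ∀ i, Ω i ⊆ Metric.closedBall (0 : EuclideanSpace ℝ (Fin n)) dmax)
    (Pe : ℝ → ℝ)
    (hPe : ∀ γ, Pe γ =
      1 - ∑ i, q i * ∫ x in Ω i,
        (γ / (2 * π)) ^ ((n : ℝ) / 2) * Real.exp (-γ * ‖x‖ ^ 2 / 2)) :
    ConcaveOn ℝ (Ioc (0 : ℝ) (((n : ℝ) - 2) / dmax ^ 2)) Pe := by
  have hrw : Pe = fun γ => 1 - ∑ i, q i * ∫ x in Ω i,
      (γ / (2 * π)) ^ ((n : ℝ) / 2) * Real.exp (-γ * ‖x‖ ^ 2 / 2) := funext hPe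
  rw [hrw]
  have hF : ∀ i, ConvexOn ℝ (Ioc (0:ℝ) (((n:ℝ)-2)/dmax^2))
      (fun γ => ∫ x in Ω i, (γ/(2*π)) ^ ((n:ℝ)/2) * Real.exp (-γ * ‖x‖^2/2)) :=
    fun i => Fi_convexOn n hn (Ω i) (hΩmeas i) (hΩstar i) dmax hdmax (hball i)
  have hsum : ∀ t : Finset (Fin M), ConvexOn ℝ (Ioc (0:ℝ) (((n:ℝ)-2)/dmax^2))
      (fun γ => ∑ i ∈ t, q i * ∫ x in Ω i,
        (γ/(2*π)) ^ ((n:ℝ)/2) * Real.exp (-γ * ‖x‖^2/2)) := by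
    intro t
    induction t using Finset.induction_on with
    | empty =>
      simp only [Finset.sum_empty]
      exact convexOn_const 0 (convex_Ioc _ _)
    | @insert j t hj ih =>
      simp only [Finset.sum_insert hj]
      exact ((hF j).smul (hq j)).add ih
  have hconc : ConcaveOn ℝ (Ioc (0:ℝ) (((n:ℝ)-2)/dmax^2))
      ((fun γ => -(∑ i, q i * ∫ x in Ω i,
        (γ/(2*π)) ^ ((n:ℝ)/2) * Real.exp (-γ * ‖x‖^2/2))) + fun _ => 1) :=
    (hsum Finset.univ).neg.add_const 1
  have hfun : (fun γ => 1 - ∑ i, q i * ∫ x in Ω i,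
      (γ / (2 * π)) ^ ((n : ℝ) / 2) * Real.exp (-γ * ‖x‖ ^ 2 / 2))
      = ((fun γ => -(∑ i, q i * ∫ x in Ω i,
        (γ/(2*π)) ^ ((n:ℝ)/2) * Real.exp (-γ * ‖x‖^2/2))) + fun _ => 1) := by
    funext γ
    simp [sub_eq_neg_add, Pi.add_apply]
  rw [hfun]
  exact hconc
end

section
/- Let n ≥ 1, d > 0, and consider the symbol error rate for a spherical decision region of radius d in the AWGN channel: P_e(γ) = 1 − ∫_{Metric.closedBall 0 d} (γ/(2π))^{n/2} exp(−γ‖x‖²/2) dx for SNR γ > 0. Then P_e is strictly convex on the set {γ : γ > 0 and γ ≥ (n−2)/d²}, and if n ≥ 3 it is strictly concave on the interval (0, (n−2)/d²]; in particular γ = (n−2)/d² is the unique inflection point when n ≥ 3. -/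
open MeasureTheory Real Set

noncomputable def Gf (n : ℕ) : ℝ → ℝ :=
  fun t => ∫ s in (0:ℝ)..t, s ^ (n - 1) * Real.exp (-s ^ 2 / 2)

lemma Gf_hasDerivAt (n : ℕ) (t : ℝ) :
    HasDerivAt (Gf n) (t ^ (n - 1) * Real.exp (-t ^ 2 / 2)) t := by
  have hc : Continuous fun s : ℝ => s ^ (n - 1) * Real.exp (-s ^ 2 / 2) := by fun_prop
  exact intervalIntegral.integral_hasDerivAt_right (hc.intervalIntegrable _ _)
    hc.aestronglyMeasurable.stronglyMeasurableAtFilter hc.continuousAt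

lemma aux_closed_form (n : ℕ) (hn : 1 ≤ n) (d : ℝ) (hd : 0 < d) (γ : ℝ) (hγ : 0 < γ) :
    (∫ x in Metric.closedBall (0 : EuclideanSpace ℝ (Fin n)) d,
        (γ / (2 * π)) ^ ((n : ℝ) / 2) * Real.exp (-γ * ‖x‖ ^ 2 / 2))
    = ((n : ℝ) * (volume (Metric.ball (0 : EuclideanSpace ℝ (Fin n)) 1)).toReal
        * (2 * π) ^ (-((n : ℝ) / 2)))
      * Gf n (d * Real.sqrt γ) := by
  haveI : Nonempty (Fin n) := ⟨⟨0, hn⟩⟩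
  haveI : Nontrivial (EuclideanSpace ℝ (Fin n)) := inferInstance
  set C : ℝ := (γ / (2 * π)) ^ ((n : ℝ) / 2) with hC
  set f : ℝ → ℝ := Set.indicator (Iic d) (fun r => C * Real.exp (-γ * r ^ 2 / 2)) with hf
  have step1 : (∫ x in Metric.closedBall (0 : EuclideanSpace ℝ (Fin n)) d,
        C * Real.exp (-γ * ‖x‖ ^ 2 / 2)) = ∫ x : EuclideanSpace ℝ (Fin n), f ‖x‖ := by
    rw [← MeasureTheory.integral_indicator (measurableSet_closedBall)]
    congr 1
    funext x
    simp only [hf, Set.indicator, Metric.mem_closedBall, dist_zero_right, Set.mem_Iic]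
  rw [step1, integral_fun_norm_addHaar volume f]
  simp only [finrank_euclideanSpace_fin]
  have hsm : ∀ y : ℝ, y ^ (n - 1) • f y
      = Set.indicator (Iic d) (fun r => r ^ (n - 1) * (C * Real.exp (-γ * r ^ 2 / 2))) y := by
    intro y
    simp only [hf, smul_eq_mul, Set.indicator_apply]
    split_ifs <;> ring
  simp only [hsm]
  rw [MeasureTheory.setIntegral_indicator measurableSet_Iic, Set.Ioi_inter_Iic,
    ← intervalIntegral.integral_of_le hd.le]
  have hs0 : (0:ℝ) < Real.sqrt γ := Real.sqrt_pos.2 hγ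
  have hpt : ∀ x : ℝ, (x * Real.sqrt γ) ^ (n - 1) * Real.exp (-(x * Real.sqrt γ) ^ 2 / 2)
      = Real.sqrt γ ^ (n - 1) * (x ^ (n - 1) * Real.exp (-γ * x ^ 2 / 2)) := by
    intro x
    have h2 : (x * Real.sqrt γ) ^ 2 = γ * x ^ 2 := by
      rw [mul_pow, Real.sq_sqrt hγ.le]; ring
    rw [mul_pow, h2]
    ring_nf
  have hGf : Gf n (d * Real.sqrt γ)
      = Real.sqrt γ ^ n * ∫ x in (0:ℝ)..d, x ^ (n - 1) * Real.exp (-γ * x ^ 2 / 2) := by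
    have h := intervalIntegral.smul_integral_comp_mul_right
      (a := 0) (b := d) (fun s => s ^ (n - 1) * Real.exp (-s ^ 2 / 2)) (Real.sqrt γ)
    rw [zero_mul] at h
    rw [Gf, ← h, smul_eq_mul]
    simp only [hpt]
    rw [intervalIntegral.integral_const_mul, ← mul_assoc, ← pow_succ',
      Nat.sub_add_cancel hn]
  have hCpt : ∀ r : ℝ, r ^ (n - 1) * (C * Real.exp (-γ * r ^ 2 / 2))
      = C * (r ^ (n - 1) * Real.exp (-γ * r ^ 2 / 2)) := fun r => by ring
  simp only [hCpt]
  rw [intervalIntegral.integral_const_mul, hGf]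
  have hCval : C = (2 * π) ^ (-((n : ℝ) / 2)) * Real.sqrt γ ^ n := by
    have h2π : (0:ℝ) < 2 * π := by positivity
    have hsq : Real.sqrt γ ^ n = γ ^ ((n : ℝ) / 2) := by
      rw [Real.sqrt_eq_rpow, ← Real.rpow_natCast (γ ^ ((1:ℝ)/2)) n, ← Real.rpow_mul hγ.le]
      ring_nf
    rw [hC, Real.div_rpow hγ.le h2π.le, Real.rpow_neg h2π.le, ← hsq]
    field_simp
  rw [hCval, nsmul_eq_mul, smul_eq_mul, measureReal_def]
  ring

/-- For a spherical decision region of radius `d` in the AWGN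
channel, the SER is strictly convex in the SNR on `{γ | 0 < γ ∧ (n-2)/d² ≤ γ}`;
for `n ≥ 3` it is strictly concave on `(0, (n-2)/d²]`, and `γ = (n-2)/d²` is the
unique inflection point (unique zero of the second derivative on `(0, ∞)`). -/
theorem ser_spherical_region_strict_convexity
    (n : ℕ) (hn : 1 ≤ n) (d : ℝ) (hd : 0 < d)
    (Pe : ℝ → ℝ)
    (hPe : ∀ γ, Pe γ =
      1 - ∫ x in Metric.closedBall (0 : EuclideanSpace ℝ (Fin n)) d,
        (γ / (2 * π)) ^ ((n : ℝ) / 2) * Real.exp (-γ * ‖x‖ ^ 2 / 2)) :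
    StrictConvexOn ℝ {γ : ℝ | 0 < γ ∧ ((n : ℝ) - 2) / d ^ 2 ≤ γ} Pe ∧
      (3 ≤ n → StrictConcaveOn ℝ (Ioc (0 : ℝ) (((n : ℝ) - 2) / d ^ 2)) Pe) ∧
      (3 ≤ n → ∀ γ : ℝ, 0 < γ →
        (iteratedDeriv 2 Pe γ = 0 ↔ γ = ((n : ℝ) - 2) / d ^ 2)) := by
  set K : ℝ := (n : ℝ) * (volume (Metric.ball (0 : EuclideanSpace ℝ (Fin n)) 1)).toReal
      * (2 * π) ^ (-((n : ℝ) / 2)) with hKdef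
  have hVpos : 0 < (volume (Metric.ball (0 : EuclideanSpace ℝ (Fin n)) 1)).toReal := by
    haveI : Nonempty (Fin n) := ⟨⟨0, hn⟩⟩
    refine ENNReal.toReal_pos (ne_of_gt (Metric.measure_ball_pos _ _ one_pos)) ?_
    exact (measure_ball_lt_top).ne
  have hK : 0 < K := by
    have : (0:ℝ) < (2 * π) ^ (-((n : ℝ) / 2)) := Real.rpow_pos_of_pos (by positivity) _
    have hn' : (0:ℝ) < (n:ℝ) := by exact_mod_cast hn
    positivity
  have hPeG : ∀ γ : ℝ, 0 < γ → Pe γ = 1 - K * Gf n (d * Real.sqrt γ) := by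
    intro γ hγ
    rw [hPe γ, aux_closed_form n hn d hd γ hγ]
  set q : ℝ := ((n : ℝ) - 2) / 2 with hq
  set D1 : ℝ → ℝ := fun γ => -(K * d ^ n / 2) * (γ ^ q * Real.exp (-(d ^ 2 * γ) / 2))
    with hD1def
  set D2 : ℝ → ℝ := fun γ => K * d ^ n / 4 * (γ ^ (((n:ℝ) - 4) / 2)
      * Real.exp (-(d ^ 2 * γ) / 2)) * (d ^ 2 * γ - ((n:ℝ) - 2)) with hD2def
  have hD1 : ∀ γ : ℝ, 0 < γ → HasDerivAt Pe (D1 γ) γ := by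
    intro γ hγ
    have hs0 : (0:ℝ) < Real.sqrt γ := Real.sqrt_pos.2 hγ
    have hs : HasDerivAt Real.sqrt (1 / (2 * Real.sqrt γ)) γ := Real.hasDerivAt_sqrt hγ.ne'
    have hmul : HasDerivAt (fun x : ℝ => d * Real.sqrt x) (d * (1 / (2 * Real.sqrt γ))) γ :=
      hs.const_mul d
    have h1 : HasDerivAt (fun x : ℝ => Gf n (d * Real.sqrt x))
        (((d * Real.sqrt γ) ^ (n - 1) * Real.exp (-(d * Real.sqrt γ) ^ 2 / 2))
          * (d * (1 / (2 * Real.sqrt γ)))) γ :=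
      HasDerivAt.comp γ (Gf_hasDerivAt n _) hmul
    have h2 : HasDerivAt (fun x : ℝ => 1 - K * Gf n (d * Real.sqrt x))
        (-(K * (((d * Real.sqrt γ) ^ (n - 1) * Real.exp (-(d * Real.sqrt γ) ^ 2 / 2))
          * (d * (1 / (2 * Real.sqrt γ)))))) γ := ((h1.const_mul K).const_sub 1)
    have hEq : Pe =ᶠ[nhds γ] fun x : ℝ => 1 - K * Gf n (d * Real.sqrt x) :=
      Filter.eventuallyEq_of_mem (Ioi_mem_nhds hγ) fun x hx => hPeG x hx
    have h3 := h2.congr_of_eventuallyEq hEq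
    have key : -(K * (((d * Real.sqrt γ) ^ (n - 1) * Real.exp (-(d * Real.sqrt γ) ^ 2 / 2))
          * (d * (1 / (2 * Real.sqrt γ))))) = D1 γ := by
      have hsq2 : (d * Real.sqrt γ) ^ 2 = d ^ 2 * γ := by
        rw [mul_pow, Real.sq_sqrt hγ.le]
      have e1 : Real.sqrt γ ^ (n - 1) = γ ^ (((n:ℝ) - 1) / 2) := by
        rw [Real.sqrt_eq_rpow, ← Real.rpow_natCast (γ ^ ((1:ℝ)/2)) (n-1),
          ← Real.rpow_mul hγ.le, Nat.cast_sub hn]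
        ring_nf
      have e2 : γ ^ (((n:ℝ) - 1) / 2) = γ ^ q * γ ^ ((1:ℝ)/2) := by
        rw [← Real.rpow_add hγ, hq]; ring_nf
      have e3 : d ^ (n - 1) * d = d ^ n := by
        rw [← pow_succ, Nat.sub_add_cancel hn]
      have hrs : Real.sqrt γ = γ ^ ((1:ℝ)/2) := Real.sqrt_eq_rpow γ
      have hne : γ ^ ((1:ℝ)/2) ≠ 0 := (Real.rpow_pos_of_pos hγ _).ne'
      rw [hD1def, hsq2, mul_pow, e1, e2, hrs, ← e3]
      field_simp
    exact key ▸ h3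
  have hD2 : ∀ γ : ℝ, 0 < γ → HasDerivAt D1 (D2 γ) γ := by
    intro γ hγ
    have hrp : HasDerivAt (fun x : ℝ => x ^ q) (q * γ ^ (q - 1)) γ :=
      Real.hasDerivAt_rpow_const (Or.inl hγ.ne')
    have hexp : HasDerivAt (fun x : ℝ => Real.exp (-(d ^ 2 * x) / 2))
        (Real.exp (-(d ^ 2 * γ) / 2) * (-(d ^ 2) / 2)) γ := by
      have : HasDerivAt (fun x : ℝ => -(d ^ 2 * x) / 2) (-(d ^ 2) / 2) γ := by
        simpa using (((hasDerivAt_id γ).const_mul (d ^ 2)).neg.div_const 2)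
      exact this.exp
    have hprod := ((hrp.mul hexp).const_mul (-(K * d ^ n / 2)))
    have key : -(K * d ^ n / 2) * (q * γ ^ (q - 1) * Real.exp (-(d ^ 2 * γ) / 2)
        + γ ^ q * (Real.exp (-(d ^ 2 * γ) / 2) * (-(d ^ 2) / 2))) = D2 γ := by
      have e1 : γ ^ q = γ ^ (q - 1) * γ := by
        nth_rewrite 1 [show q = (q - 1) + 1 by ring]
        rw [Real.rpow_add hγ, Real.rpow_one]
      have e2 : q - 1 = ((n:ℝ) - 4) / 2 := by rw [hq]; ring
      rw [e1, e2, hD2def, hq]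
      ring
    exact key ▸ hprod
  have hderivPe : ∀ γ : ℝ, 0 < γ → deriv Pe γ = D1 γ := fun γ h => (hD1 γ h).deriv
  have hD2Pe : ∀ γ : ℝ, 0 < γ → HasDerivAt (deriv Pe) (D2 γ) γ := by
    intro γ hγ
    refine (hD2 γ hγ).congr_of_eventuallyEq ?_
    exact Filter.eventuallyEq_of_mem (Ioi_mem_nhds hγ) fun x hx => hderivPe x hx
  have hderiv2 : ∀ γ : ℝ, 0 < γ → deriv (deriv Pe) γ = D2 γ := fun γ h => (hD2Pe γ h).deriv
  set cc : ℝ := ((n : ℝ) - 2) / d ^ 2 with hcc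
  have hd2 : (0:ℝ) < d ^ 2 := by positivity
  have hP : ∀ γ : ℝ, 0 < γ → 0 < K * d ^ n / 4 * (γ ^ (((n:ℝ) - 4) / 2)
      * Real.exp (-(d ^ 2 * γ) / 2)) := by
    intro γ hγ
    have h1 : (0:ℝ) < γ ^ (((n:ℝ) - 4) / 2) := Real.rpow_pos_of_pos hγ _
    have h2 : (0:ℝ) < Real.exp (-(d ^ 2 * γ) / 2) := Real.exp_pos _
    positivity
  have hsub : ∀ γ : ℝ, (cc < γ ↔ 0 < d ^ 2 * γ - ((n:ℝ) - 2)) ∧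
      (γ < cc ↔ d ^ 2 * γ - ((n:ℝ) - 2) < 0) ∧ (γ = cc ↔ d ^ 2 * γ - ((n:ℝ) - 2) = 0) := by
    intro γ
    constructor
    · rw [hcc, div_lt_iff₀ hd2, sub_pos, mul_comm]
    constructor
    · rw [hcc, lt_div_iff₀ hd2, sub_neg, mul_comm]
    · rw [hcc, sub_eq_zero, eq_div_iff hd2.ne', mul_comm]
  refine ⟨?_, ?_, ?_⟩
  · have hSeq : {γ : ℝ | 0 < γ ∧ cc ≤ γ} = Ioi (0:ℝ) ∩ Ici cc := by
      ext x; exact Iff.rfl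
    rw [hSeq]
    refine StrictMonoOn.strictConvexOn_of_deriv ((convex_Ioi 0).inter (convex_Ici cc)) ?_ ?_
    · intro γ hγ
      exact ((hD1 γ hγ.1).continuousAt).continuousWithinAt
    · have hint : interior (Ioi (0:ℝ) ∩ Ici cc) = Ioi 0 ∩ Ioi cc := by
        rw [interior_inter, interior_Ioi, interior_Ici]
      rw [hint]
      refine strictMonoOn_of_deriv_pos ((convex_Ioi 0).inter (convex_Ioi cc)) ?_ ?_
      · intro γ hγ
        exact ((hD2Pe γ hγ.1).continuousAt).continuousWithinAt
      · intro γ hγ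
        rw [IsOpen.interior_eq (isOpen_Ioi.inter isOpen_Ioi)] at hγ
        rw [hderiv2 γ hγ.1]
        exact mul_pos (hP γ hγ.1) ((hsub γ).1.mp hγ.2)
  · intro h3n
    have h3r : (3:ℝ) ≤ (n:ℝ) := by exact_mod_cast h3n
    have hccpos : 0 < cc := by
      rw [hcc]; apply div_pos (by linarith) hd2
    refine StrictAntiOn.strictConcaveOn_of_deriv (convex_Ioc 0 cc) ?_ ?_
    · intro γ hγ
      exact ((hD1 γ hγ.1).continuousAt).continuousWithinAt
    · rw [interior_Ioc]
      refine strictAntiOn_of_deriv_neg (convex_Ioo 0 cc) ?_ ?_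
      · intro γ hγ
        exact ((hD2Pe γ hγ.1).continuousAt).continuousWithinAt
      · intro γ hγ
        rw [interior_Ioo] at hγ
        rw [hderiv2 γ hγ.1]
        exact mul_neg_of_pos_of_neg (hP γ hγ.1) ((hsub γ).2.1.mp hγ.2)
  · intro _ γ hγ
    have h2d : iteratedDeriv 2 Pe γ = D2 γ := by
      rw [show (2:ℕ) = 1 + 1 from rfl, iteratedDeriv_succ, iteratedDeriv_one]
      exact hderiv2 γ hγ
    rw [h2d]
    constructor
    · intro h0
      have hPne := (hP γ hγ).ne'
      have hsubz : d ^ 2 * γ - ((n:ℝ) - 2) = 0 := by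
        rcases mul_eq_zero.mp h0 with h | h
        · exact absurd h hPne
        · exact h
      exact (hsub γ).2.2.mpr hsubz
    · intro h
      have hz := (hsub γ).2.2.mp h
      rw [hD2def]
      simp only []
      rw [hz, mul_zero]
end

section
/- Let n ≥ 1, let f : E → ℝ be a nonnegative, measurable, integrable function (the density of the normalized noise), and let 0 < γ₁ ≤ γ₂. Suppose Metric.closedBall 0 d_min ⊆ Ω_i ⊆ Metric.closedBall 0 d_max for every i, with 0 < d_min ≤ d_max, and suppose that for every unit vector u ∈ E the function p ↦ p^{(n−2)/2} · f(√p • u) is antitone (non-increasing) on the interval [γ₁·d_min², γ₂·d_max²]. Then the symbol error rate P_e(γ) = 1 − Σ_{i=1}^{M} q_i ∫_{√γ • Ω_i} f(x) dx is convex on the interval [γ₁, γ₂]. -/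
open MeasureTheory Real Set Pointwise
open scoped ENNReal
set_option maxHeartbeats 1000000

lemma aux_ae_eq_Ioc {s : Set ℝ} {x y : ℝ} (h1 : Ioo x y ⊆ s) (h2 : s ⊆ Icc x y) :
    s =ᵐ[volume] Ioc x y := by
  rw [MeasureTheory.ae_eq_set]
  constructor
  · refine measure_mono_null (fun z hz => ?_) (measure_singleton x)
    rcases hz with ⟨hzs, hz2⟩
    have hzI := h2 hzs
    simp only [mem_Ioc, not_and_or, not_lt, not_le] at hz2
    rcases hz2 with h | h
    · exact le_antisymm h hzI.1
    · exact absurd hzI.2 (not_le.2 h)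
  · refine measure_mono_null (fun z hz => ?_) (measure_singleton y)
    rcases hz with ⟨hzI, hzs⟩
    have : z ∉ Ioo x y := fun h => hzs (h1 h)
    simp only [mem_Ioo, not_and_or, not_lt] at this
    rcases this with h | h
    · exact absurd hzI.1 (not_lt.2 h)
    · exact le_antisymm hzI.2 h

lemma aux_sqrt_cov {x y : ℝ} (hx : 0 < x) (hxy : x ≤ y) (F : ℝ → ℝ≥0∞) :
    ∫⁻ r in Ioc (Real.sqrt x) (Real.sqrt y), F r
      = ∫⁻ p in Ioc x y, ENNReal.ofReal |1 / (2 * Real.sqrt p)| * F (Real.sqrt p) := by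
  have himg : Real.sqrt '' Ioc x y = Ioc (Real.sqrt x) (Real.sqrt y) := by
    apply Subset.antisymm
    · rintro r ⟨p, hp, rfl⟩
      exact ⟨Real.sqrt_lt_sqrt hx.le hp.1, Real.sqrt_le_sqrt hp.2⟩
    · rintro r ⟨h1, h2⟩
      have hr0 : 0 < r := lt_of_le_of_lt (Real.sqrt_nonneg x) h1
      refine ⟨r ^ 2, ⟨?_, ?_⟩, Real.sqrt_sq hr0.le⟩
      · nlinarith [Real.sq_sqrt hx.le, Real.sqrt_nonneg x]
      · nlinarith [Real.sq_sqrt (hx.le.trans hxy), Real.sqrt_nonneg y]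
  have hderiv : ∀ p ∈ Ioc x y, HasFDerivWithinAt Real.sqrt
      ((1 : ℝ →L[ℝ] ℝ).smulRight (1 / (2 * Real.sqrt p))) (Ioc x y) p := fun p hp =>
    ((Real.hasDerivAt_sqrt (hx.trans_le hp.1.le).ne').hasDerivWithinAt).hasFDerivWithinAt
  have hinj : InjOn Real.sqrt (Ioc x y) := fun p hp q hq h => by
    have hp0 : 0 ≤ p := (hx.trans hp.1).le
    have hq0 : 0 ≤ q := (hx.trans hq.1).le
    rw [← Real.sq_sqrt hp0, ← Real.sq_sqrt hq0, h]
  have := lintegral_image_eq_lintegral_abs_det_fderiv_mul volume measurableSet_Ioc hderiv hinj F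
  rw [himg] at this
  rw [this]
  refine lintegral_congr fun p => ?_
  rw [ContinuousLinearMap.smulRight_one_eq_toSpanSingleton, ContinuousLinearMap.det_toSpanSingleton]

lemma aux_polar {n : ℕ} (hn : 1 ≤ n) (g : EuclideanSpace ℝ (Fin n) → ℝ≥0∞)
    (hg : Measurable g) :
    ∫⁻ x, g x =
      ∫⁻ u : Metric.sphere (0 : EuclideanSpace ℝ (Fin n)) 1,
        (∫⁻ r in Ioi (0 : ℝ), ENNReal.ofReal (r ^ (n - 1)) *
          g (r • (u : EuclideanSpace ℝ (Fin n))) ∂(volume : Measure ℝ))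
      ∂((volume : Measure (EuclideanSpace ℝ (Fin n))).toSphere) := by
  haveI : Nontrivial (EuclideanSpace ℝ (Fin n)) := by
    refine ⟨EuclideanSpace.single ⟨0, hn⟩ 1, 0, fun h => ?_⟩
    have := congrArg (fun v => v ⟨0, hn⟩) h
    simp [EuclideanSpace.single_apply] at this
  have hdim : Module.finrank ℝ (EuclideanSpace ℝ (Fin n)) = n := finrank_euclideanSpace_fin
  set μ : Measure (EuclideanSpace ℝ (Fin n)) := volume with hμ
  have hcont : Continuous fun y : (Metric.sphere (0 : EuclideanSpace ℝ (Fin n)) 1 × Ioi (0 : ℝ)) =>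
      (y.2 : ℝ) • (y.1 : EuclideanSpace ℝ (Fin n)) :=
    (continuous_subtype_val.comp continuous_snd).smul (continuous_subtype_val.comp continuous_fst)
  have h2 := (μ.measurePreserving_homeomorphUnitSphereProd).lintegral_comp
    (hg.comp hcont.measurable)
  have h1 : ∫⁻ x, g x ∂μ = ∫⁻ (x : ({(0 : EuclideanSpace ℝ (Fin n))}ᶜ : Set _)), g x
      ∂(μ.comap Subtype.val) := by
    rw [lintegral_subtype_comap (measurableSet_singleton 0).compl,
      MeasureTheory.restrict_compl_singleton]
  have h3 : ∀ x : ({(0 : EuclideanSpace ℝ (Fin n))}ᶜ : Set _),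
      g ((((homeomorphUnitSphereProd (EuclideanSpace ℝ (Fin n))) x).2 : ℝ) •
        ((((homeomorphUnitSphereProd (EuclideanSpace ℝ (Fin n))) x).1 : EuclideanSpace ℝ (Fin n))))
        = g x := by
    intro x
    have hx0 : (x : EuclideanSpace ℝ (Fin n)) ≠ 0 := x.2
    congr 1
    simp only [homeomorphUnitSphereProd_apply_fst_coe, homeomorphUnitSphereProd_apply_snd_coe]
    rw [smul_inv_smul₀ (norm_ne_zero_iff.2 hx0)]
  simp only [Function.comp_def] at h2
  rw [h1, ← lintegral_congr h3, h2, lintegral_prod (fun z : Metric.sphere (0 : EuclideanSpace ℝ (Fin n)) 1 × Ioi (0:ℝ) => g ((z.2 : ℝ) • (z.1 : EuclideanSpace ℝ (Fin n)))) ((hg.comp hcont.measurable).aemeasurable)]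
  refine lintegral_congr fun u => ?_
  rw [hdim, Measure.volumeIoiPow]
  have hdens : Measurable fun r : (Ioi (0:ℝ)) => ENNReal.ofReal ((r:ℝ) ^ (n-1)) :=
    (measurable_subtype_coe.pow_const _).ennreal_ofReal
  have hfun : Measurable fun y : (Ioi (0:ℝ)) => g ((y:ℝ) • (u : EuclideanSpace ℝ (Fin n))) :=
    hg.comp ((continuous_subtype_val.smul continuous_const).measurable)
  have e1 := lintegral_withDensity_eq_lintegral_mul
    (Measure.comap Subtype.val (volume : Measure ℝ)) hdens hfun
  have e2 := lintegral_subtype_comap (μ := (volume : Measure ℝ)) (measurableSet_Ioi (a := (0:ℝ)))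
    (fun t : ℝ => ENNReal.ofReal (t ^ (n-1)) * g (t • (u : EuclideanSpace ℝ (Fin n))))
  show (∫⁻ (y : (Ioi (0:ℝ))), g ((y:ℝ) • (u : EuclideanSpace ℝ (Fin n)))
      ∂((Measure.comap Subtype.val (volume : Measure ℝ)).withDensity
        fun r : (Ioi (0:ℝ)) => ENNReal.ofReal ((r:ℝ) ^ (n-1)))) = _
  rw [e1, ← e2]
  rfl

lemma aux_radial {n : ℕ}
    (Ωi : Set (EuclideanSpace ℝ (Fin n))) (hstar : StarConvex ℝ 0 Ωi)
    (dmin dmax : ℝ) (hdmin : 0 < dmin)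
    (hsub : Metric.closedBall 0 dmin ⊆ Ωi) (hsup : Ωi ⊆ Metric.closedBall 0 dmax)
    (u : EuclideanSpace ℝ (Fin n)) (hu : ‖u‖ = 1) :
    ∃ R : ℝ, dmin ≤ R ∧ R ≤ dmax ∧ ∀ s t : ℝ, 0 < s → s ≤ t →
      (((((fun r : ℝ => r • u) ⁻¹' (Real.sqrt t • Ωi \ Real.sqrt s • Ωi)) ∩ Ioi 0) : Set ℝ)
        =ᵐ[volume] (Ioc (Real.sqrt (s * R ^ 2)) (Real.sqrt (t * R ^ 2)) : Set ℝ)) := by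
  set T : Set ℝ := {t : ℝ | 0 < t ∧ t • u ∈ Ωi} with hT
  have hdminT : dmin ∈ T := ⟨hdmin, hsub (mem_closedBall_zero_iff.2
    (by rw [norm_smul, hu, mul_one]; exact le_of_eq (abs_of_pos hdmin)))⟩
  have habs : ∀ t ∈ T, t ≤ dmax := by
    intro t ht
    have h := hsup ht.2
    rw [mem_closedBall_zero_iff, norm_smul, hu, mul_one] at h
    exact (le_abs_self t).trans h
  have hbdd : BddAbove T := ⟨dmax, habs⟩
  set R := sSup T with hR
  have hRmin : dmin ≤ R := le_csSup hbdd hdminT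
  have hRpos : 0 < R := hdmin.trans_le hRmin
  have hRmax : R ≤ dmax := csSup_le ⟨dmin, hdminT⟩ habs
  have hmemT : ∀ t : ℝ, 0 < t → t < R → t ∈ T := by
    intro t ht htR
    obtain ⟨t', ⟨ht'pos, ht'mem⟩, htt'⟩ := exists_lt_of_lt_csSup ⟨dmin, hdminT⟩ htR
    refine ⟨ht, ?_⟩
    have h1 : t • u = (t / t') • (t' • u) := by
      rw [smul_smul, div_mul_cancel₀]
      exact ht'pos.ne'
    rw [h1]
    exact hstar.smul_mem ht'mem (by positivity) (by rw [div_le_one ht'pos]; exact htt'.le)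
  have hTle : ∀ t ∈ T, t ≤ R := fun t ht => le_csSup hbdd ht
  refine ⟨R, hRmin, hRmax, fun s t hs hst => ?_⟩
  have hts : 0 < t := hs.trans_le hst
  have hss : 0 < Real.sqrt s := Real.sqrt_pos.2 hs
  have hst' : 0 < Real.sqrt t := Real.sqrt_pos.2 hts
  have hsR : Real.sqrt (s * R ^ 2) = Real.sqrt s * R := by
    rw [Real.sqrt_mul hs.le, Real.sqrt_sq hRpos.le]
  have htR' : Real.sqrt (t * R ^ 2) = Real.sqrt t * R := by
    rw [Real.sqrt_mul hts.le, Real.sqrt_sq hRpos.le]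
  rw [hsR, htR']
  have hmem : ∀ r : ℝ, 0 < r → ∀ c : ℝ, 0 < c →
      (r • u ∈ Real.sqrt c • Ωi ↔ r / Real.sqrt c ∈ T) := by
    intro r hr c hc
    have hcs : Real.sqrt c ≠ 0 := (Real.sqrt_pos.2 hc).ne'
    rw [mem_smul_set_iff_inv_smul_mem₀ hcs, smul_smul, inv_mul_eq_div]
    constructor
    · intro h; exact ⟨by positivity, h⟩
    · intro h; exact h.2
  apply aux_ae_eq_Ioc
  · rintro r ⟨h1, h2⟩
    have hr : 0 < r := lt_trans (by positivity) h1
    refine ⟨⟨?_, ?_⟩, hr⟩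
    · exact (hmem r hr t hts).2 (hmemT _ (by positivity) (by rw [div_lt_iff₀ hst']; linarith))
    · intro hmem_s
      rw [hmem r hr s hs] at hmem_s
      have := hTle _ hmem_s
      rw [div_le_iff₀ hss] at this
      linarith
  · rintro r ⟨⟨hin, hout⟩, hr0⟩
    have hr : 0 < r := hr0
    constructor
    · by_contra hcon
      push_neg at hcon
      exact hout ((hmem r hr s hs).2 (hmemT _ (by positivity)
        (by rw [div_lt_iff₀ hss]; linarith)))
    · have := hTle _ ((hmem r hr t hts).1 hin)
      rw [div_le_iff₀ hst'] at this
      linarith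

lemma aux_key {n : ℕ} (hn : 1 ≤ n)
    (f : EuclideanSpace ℝ (Fin n) → ℝ) (hf_nonneg : ∀ x, 0 ≤ f x) (hf_meas : Measurable f)
    (γ₁ γ₂ : ℝ) (hγ₁ : 0 < γ₁)
    (Ωi : Set (EuclideanSpace ℝ (Fin n))) (hmeas : MeasurableSet Ωi)
    (hstar : StarConvex ℝ 0 Ωi)
    (dmin dmax : ℝ) (hdmin : 0 < dmin)
    (hsub : Metric.closedBall 0 dmin ⊆ Ωi) (hsup : Ωi ⊆ Metric.closedBall 0 dmax)
    (hmono : ∀ u : EuclideanSpace ℝ (Fin n), ‖u‖ = 1 →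
      AntitoneOn (fun p : ℝ => p ^ (((n : ℝ) - 2) / 2) * f (Real.sqrt p • u))
        (Icc (γ₁ * dmin ^ 2) (γ₂ * dmax ^ 2)))
    {a b c : ℝ} (ha : γ₁ ≤ a) (hab : a ≤ b) (hbc : b ≤ c) (hc : c ≤ γ₂) :
    ENNReal.ofReal (b - a) *
        (∫⁻ z in (Real.sqrt c • Ωi \ Real.sqrt b • Ωi), ENNReal.ofReal (f z)) ≤
      ENNReal.ofReal (c - b) *
        (∫⁻ z in (Real.sqrt b • Ωi \ Real.sqrt a • Ωi), ENNReal.ofReal (f z)) := by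
  have ha0 : 0 < a := hγ₁.trans_le ha
  have hb0 : 0 < b := ha0.trans_le hab
  have hc0 : 0 < c := hb0.trans_le hbc
  have hsm : ∀ t : ℝ, MeasurableSet (Real.sqrt t • Ωi) := fun t =>
    hmeas.const_smul₀ (Real.sqrt t)
  have hA1m : MeasurableSet (Real.sqrt b • Ωi \ Real.sqrt a • Ωi) := (hsm b).diff (hsm a)
  have hA2m : MeasurableSet (Real.sqrt c • Ωi \ Real.sqrt b • Ωi) := (hsm c).diff (hsm b)
  have hind : ∀ A : Set (EuclideanSpace ℝ (Fin n)), MeasurableSet A →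
      Measurable (A.indicator fun z => ENNReal.ofReal (f z)) := fun A hA =>
    (hf_meas.ennreal_ofReal).indicator hA
  have e1 : ∫⁻ z in (Real.sqrt b • Ωi \ Real.sqrt a • Ωi), ENNReal.ofReal (f z) =
      ∫⁻ u : Metric.sphere (0 : EuclideanSpace ℝ (Fin n)) 1,
        (∫⁻ r in Ioi (0 : ℝ), ENNReal.ofReal (r ^ (n - 1)) *
          ((Real.sqrt b • Ωi \ Real.sqrt a • Ωi).indicator (fun z => ENNReal.ofReal (f z))
            (r • (u : EuclideanSpace ℝ (Fin n)))) ∂(volume : Measure ℝ))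
      ∂((volume : Measure (EuclideanSpace ℝ (Fin n))).toSphere) := by
    rw [← lintegral_indicator hA1m]
    exact aux_polar hn _ (hind _ hA1m)
  have e2 : ∫⁻ z in (Real.sqrt c • Ωi \ Real.sqrt b • Ωi), ENNReal.ofReal (f z) =
      ∫⁻ u : Metric.sphere (0 : EuclideanSpace ℝ (Fin n)) 1,
        (∫⁻ r in Ioi (0 : ℝ), ENNReal.ofReal (r ^ (n - 1)) *
          ((Real.sqrt c • Ωi \ Real.sqrt b • Ωi).indicator (fun z => ENNReal.ofReal (f z))
            (r • (u : EuclideanSpace ℝ (Fin n)))) ∂(volume : Measure ℝ))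
      ∂((volume : Measure (EuclideanSpace ℝ (Fin n))).toSphere) := by
    rw [← lintegral_indicator hA2m]
    exact aux_polar hn _ (hind _ hA2m)
  rw [e1, e2, ← lintegral_const_mul' _ _ ENNReal.ofReal_ne_top,
    ← lintegral_const_mul' _ _ ENNReal.ofReal_ne_top]
  refine lintegral_mono fun u => ?_
  have hU : ‖(u : EuclideanSpace ℝ (Fin n))‖ = 1 := by
    simpa using mem_sphere_zero_iff_norm.1 u.2
  obtain ⟨R, hRmin, hRmax, hrad⟩ := aux_radial Ωi hstar dmin dmax hdmin hsub hsup _ hU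
  have hRpos : 0 < R := hdmin.trans_le hRmin
  set U : EuclideanSpace ℝ (Fin n) := (u : EuclideanSpace ℝ (Fin n)) with hUdef
  -- inner integral computation
  have calcInner : ∀ s t : ℝ, 0 < s → s ≤ t →
      (∫⁻ r in Ioi (0 : ℝ), ENNReal.ofReal (r ^ (n - 1)) *
        ((Real.sqrt t • Ωi \ Real.sqrt s • Ωi).indicator (fun z => ENNReal.ofReal (f z))
          (r • U)) ∂(volume : Measure ℝ)) =
      ∫⁻ p in Ioc (s * R ^ 2) (t * R ^ 2),
        ENNReal.ofReal |1 / (2 * Real.sqrt p)| *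
          ENNReal.ofReal (Real.sqrt p ^ (n - 1) * f (Real.sqrt p • U)) := by
    intro s t hs hst
    have hfibm : Measurable (fun r : ℝ => r • U) :=
      (continuous_id.smul continuous_const).measurable
    have hAm : MeasurableSet (Real.sqrt t • Ωi \ Real.sqrt s • Ωi) := (hsm t).diff (hsm s)
    have hSm : MeasurableSet ((fun r : ℝ => r • U) ⁻¹' (Real.sqrt t • Ωi \ Real.sqrt s • Ωi)) :=
      hfibm hAm
    calc (∫⁻ r in Ioi (0 : ℝ), ENNReal.ofReal (r ^ (n - 1)) *
          ((Real.sqrt t • Ωi \ Real.sqrt s • Ωi).indicator (fun z => ENNReal.ofReal (f z))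
            (r • U)) ∂(volume : Measure ℝ))
        = ∫⁻ r in Ioi (0 : ℝ),
            ((fun r : ℝ => r • U) ⁻¹' (Real.sqrt t • Ωi \ Real.sqrt s • Ωi)).indicator
              (fun r => ENNReal.ofReal (r ^ (n - 1) * f (r • U))) r ∂(volume : Measure ℝ) := by
          refine setLIntegral_congr_fun measurableSet_Ioi (fun r hr => ?_)
          by_cases hrA : r • U ∈ Real.sqrt t • Ωi \ Real.sqrt s • Ωi
          · rw [Set.indicator_of_mem hrA, Set.indicator_of_mem (by exact hrA),
              ENNReal.ofReal_mul (pow_nonneg (le_of_lt hr) _)]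
          · rw [Set.indicator_of_notMem hrA, Set.indicator_of_notMem (by exact hrA), mul_zero]
      _ = ∫⁻ r in ((fun r : ℝ => r • U) ⁻¹' (Real.sqrt t • Ωi \ Real.sqrt s • Ωi)) ∩ Ioi 0,
            ENNReal.ofReal (r ^ (n - 1) * f (r • U)) := by
          rw [lintegral_indicator hSm, Measure.restrict_restrict hSm]
      _ = ∫⁻ r in Ioc (Real.sqrt (s * R ^ 2)) (Real.sqrt (t * R ^ 2)),
            ENNReal.ofReal (r ^ (n - 1) * f (r • U)) := by
          rw [Measure.restrict_congr_set (hrad s t hs hst)]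
      _ = _ := aux_sqrt_cov (by positivity) (by nlinarith [mul_nonneg (sub_nonneg.2 hst) (sq_nonneg R)]) _
  -- the weight function
  set W : ℝ → ℝ≥0∞ := fun p => ENNReal.ofReal
    ((1/2) * (p ^ (((n : ℝ) - 2) / 2) * f (Real.sqrt p • U))) with hWdef
  have hrpm : Measurable fun p : ℝ => p ^ (((n : ℝ) - 2) / 2) := by fun_prop
  have hWm : Measurable W := by
    apply Measurable.ennreal_ofReal
    apply Measurable.const_mul
    exact hrpm.mul
      (hf_meas.comp ((Real.continuous_sqrt.smul continuous_const).measurable))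
  have hWeq : ∀ s t : ℝ, 0 < s → s ≤ t →
      (∫⁻ p in Ioc (s * R ^ 2) (t * R ^ 2),
        ENNReal.ofReal |1 / (2 * Real.sqrt p)| *
          ENNReal.ofReal (Real.sqrt p ^ (n - 1) * f (Real.sqrt p • U))) =
      ∫⁻ p in Ioc (s * R ^ 2) (t * R ^ 2), W p := by
    intro s t hs hst
    refine setLIntegral_congr_fun measurableSet_Ioc (fun p hp => ?_)
    have hp0 : 0 < p := lt_trans (by positivity) hp.1
    have hsp : 0 < Real.sqrt p := Real.sqrt_pos.2 hp0
    have hcast : ((n - 1 : ℕ) : ℝ) = (n : ℝ) - 1 := by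
      push_cast [Nat.cast_sub hn]
      ring
    have hh : Real.sqrt p ^ (n - 1) = Real.sqrt p * p ^ (((n : ℝ) - 2) / 2) := by
      rw [Real.sqrt_eq_rpow, ← Real.rpow_natCast (p ^ ((1:ℝ)/2)) (n - 1), ← Real.rpow_mul hp0.le,
        ← Real.rpow_add hp0]
      congr 1
      rw [hcast]
      ring
    rw [abs_of_pos (by positivity), ← ENNReal.ofReal_mul (by positivity), hh]
    show ENNReal.ofReal _ = ENNReal.ofReal _
    congr 1
    field_simp
  -- membership in the antitone interval
  have hmemIcc : ∀ s t p : ℝ, γ₁ ≤ s → t ≤ γ₂ → p ∈ Ioc (s * R ^ 2) (t * R ^ 2) →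
      p ∈ Icc (γ₁ * dmin ^ 2) (γ₂ * dmax ^ 2) := by
    intro s t p hs ht hp
    have hspos : 0 < s := hγ₁.trans_le hs
    have hd2 : dmin ^ 2 ≤ R ^ 2 := by nlinarith
    have hR2 : R ^ 2 ≤ dmax ^ 2 := by nlinarith
    have hγ₂ : 0 < γ₂ := hγ₁.trans_le (by linarith)
    constructor
    · have h1 : γ₁ * dmin ^ 2 ≤ s * R ^ 2 := by
        nlinarith [mul_nonneg (sub_nonneg.2 hs) (sq_nonneg dmin),
          mul_nonneg hspos.le (sub_nonneg.2 hd2)]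
      linarith [hp.1]
    · have h1 : t * R ^ 2 ≤ γ₂ * dmax ^ 2 := by
        nlinarith [mul_nonneg (sub_nonneg.2 ht) (sq_nonneg R),
          mul_nonneg hγ₂.le (sub_nonneg.2 hR2)]
      linarith [hp.2]
  have hmonoU := hmono U hU
  -- lower bound for the (a,b) annulus
  have hbR : (b * R ^ 2) ∈ Icc (γ₁ * dmin ^ 2) (γ₂ * dmax ^ 2) := by
    have hd2 : dmin ^ 2 ≤ R ^ 2 := by nlinarith
    have hR2 : R ^ 2 ≤ dmax ^ 2 := by nlinarith
    have hγ₂ : 0 < γ₂ := hγ₁.trans_le (by linarith)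
    constructor
    · nlinarith [mul_nonneg (sub_nonneg.2 (ha.trans hab)) (sq_nonneg dmin),
        mul_nonneg hb0.le (sub_nonneg.2 hd2)]
    · nlinarith [mul_nonneg (sub_nonneg.2 (hbc.trans hc)) (sq_nonneg R),
        mul_nonneg hγ₂.le (sub_nonneg.2 hR2)]
  have hlow : ENNReal.ofReal ((b - a) * R ^ 2) * W (b * R ^ 2) ≤
      ∫⁻ p in Ioc (a * R ^ 2) (b * R ^ 2), W p := by
    have hvol : (volume (Ioc (a * R ^ 2) (b * R ^ 2))) = ENNReal.ofReal ((b - a) * R ^ 2) := by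
      rw [Real.volume_Ioc]
      congr 1
      ring
    calc ENNReal.ofReal ((b - a) * R ^ 2) * W (b * R ^ 2)
        = ∫⁻ _ in Ioc (a * R ^ 2) (b * R ^ 2), W (b * R ^ 2) := by
          rw [setLIntegral_const, hvol, mul_comm]
      _ ≤ ∫⁻ p in Ioc (a * R ^ 2) (b * R ^ 2), W p := by
          refine setLIntegral_mono hWm fun p hp => ?_
          refine ENNReal.ofReal_le_ofReal ?_
          refine mul_le_mul_of_nonneg_left ?_ (by norm_num)
          exact hmonoU (hmemIcc a b p ha (hbc.trans hc) hp) hbR hp.2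
  -- upper bound for the (b,c) annulus
  have hhigh : (∫⁻ p in Ioc (b * R ^ 2) (c * R ^ 2), W p) ≤
      ENNReal.ofReal ((c - b) * R ^ 2) * W (b * R ^ 2) := by
    have hvol : (volume (Ioc (b * R ^ 2) (c * R ^ 2))) = ENNReal.ofReal ((c - b) * R ^ 2) := by
      rw [Real.volume_Ioc]
      congr 1
      ring
    calc (∫⁻ p in Ioc (b * R ^ 2) (c * R ^ 2), W p)
        ≤ ∫⁻ _ in Ioc (b * R ^ 2) (c * R ^ 2), W (b * R ^ 2) := by
          refine setLIntegral_mono measurable_const fun p hp => ?_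
          refine ENNReal.ofReal_le_ofReal ?_
          refine mul_le_mul_of_nonneg_left ?_ (by norm_num)
          exact hmonoU hbR (hmemIcc b c p (ha.trans hab) hc hp) hp.1.le
      _ = ENNReal.ofReal ((c - b) * R ^ 2) * W (b * R ^ 2) := by
          rw [setLIntegral_const, hvol, mul_comm]
  -- assemble
  rw [calcInner b c hb0 hbc, calcInner a b ha0 hab, hWeq b c hb0 hbc, hWeq a b ha0 hab]
  calc ENNReal.ofReal (b - a) * ∫⁻ p in Ioc (b * R ^ 2) (c * R ^ 2), W p
      ≤ ENNReal.ofReal (b - a) * (ENNReal.ofReal ((c - b) * R ^ 2) * W (b * R ^ 2)) :=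
        mul_le_mul_right hhigh _
    _ = ENNReal.ofReal (c - b) * (ENNReal.ofReal ((b - a) * R ^ 2) * W (b * R ^ 2)) := by
        have h : ENNReal.ofReal (b - a) * ENNReal.ofReal ((c - b) * R ^ 2)
            = ENNReal.ofReal (c - b) * ENNReal.ofReal ((b - a) * R ^ 2) := by
          rw [← ENNReal.ofReal_mul (by linarith : (0:ℝ) ≤ b - a),
            ← ENNReal.ofReal_mul (by linarith : (0:ℝ) ≤ c - b)]
          congr 1
          ring
        rw [← mul_assoc, ← mul_assoc, h]
    _ ≤ ENNReal.ofReal (c - b) * ∫⁻ p in Ioc (a * R ^ 2) (b * R ^ 2), W p :=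
        mul_le_mul_right hlow _

lemma aux_core {n : ℕ} (hn : 1 ≤ n)
    (f : EuclideanSpace ℝ (Fin n) → ℝ) (hf_nonneg : ∀ x, 0 ≤ f x) (hf_meas : Measurable f)
    (hf_int : Integrable f)
    (γ₁ γ₂ : ℝ) (hγ₁ : 0 < γ₁)
    (Ωi : Set (EuclideanSpace ℝ (Fin n))) (hmeas : MeasurableSet Ωi)
    (hstar : StarConvex ℝ 0 Ωi)
    (dmin dmax : ℝ) (hdmin : 0 < dmin)
    (hsub : Metric.closedBall 0 dmin ⊆ Ωi) (hsup : Ωi ⊆ Metric.closedBall 0 dmax)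
    (hmono : ∀ u : EuclideanSpace ℝ (Fin n), ‖u‖ = 1 →
      AntitoneOn (fun p : ℝ => p ^ (((n : ℝ) - 2) / 2) * f (Real.sqrt p • u))
        (Icc (γ₁ * dmin ^ 2) (γ₂ * dmax ^ 2)))
    {x y a b : ℝ} (hx : x ∈ Icc γ₁ γ₂) (hy : y ∈ Icc γ₁ γ₂) (hxy : x ≤ y)
    (ha : 0 ≤ a) (hb : 0 ≤ b) (hab : a + b = 1) :
    a * (∫ z in Real.sqrt x • Ωi, f z) + b * (∫ z in Real.sqrt y • Ωi, f z)
      ≤ ∫ z in Real.sqrt (a * x + b * y) • Ωi, f z := by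
  have hG : ∀ t : ℝ, ∫ z in Real.sqrt t • Ωi, f z
      = (∫⁻ z in Real.sqrt t • Ωi, ENNReal.ofReal (f z)).toReal := fun t => by
    rw [integral_eq_lintegral_of_nonneg_ae (ae_of_all _ hf_nonneg)
      hf_meas.aestronglyMeasurable]
  rcases eq_or_lt_of_le hxy with heq | hlt
  · subst heq
    have hmeq : a * x + b * x = x := by linear_combination x * hab
    rw [hmeq]
    exact le_of_eq (by linear_combination (∫ z in Real.sqrt x • Ωi, f z) * hab)
  set m := a * x + b * y with hmdef
  have hmx : m - x = b * (y - x) := by linear_combination x * hab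
  have hym : y - m = a * (y - x) := by linear_combination (-y) * hab
  have hxm : x ≤ m := by nlinarith [hmx, mul_nonneg hb (sub_nonneg.2 hlt.le)]
  have hmy : m ≤ y := by nlinarith [hym, mul_nonneg ha (sub_nonneg.2 hlt.le)]
  have hm : m ∈ Icc γ₁ γ₂ := ⟨hx.1.trans hxm, hmy.trans hy.2⟩
  have hsm : ∀ t : ℝ, MeasurableSet (Real.sqrt t • Ωi) := fun t => hmeas.const_smul₀ _
  have hfin : ∀ A : Set (EuclideanSpace ℝ (Fin n)),
      (∫⁻ z in A, ENNReal.ofReal (f z)) ≠ ∞ := fun A =>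
    ((setLIntegral_le_lintegral _ _).trans_lt hf_int.lintegral_lt_top).ne
  have hdil : ∀ s t : ℝ, 0 < s → s ≤ t → Real.sqrt s • Ωi ⊆ Real.sqrt t • Ωi := by
    intro s t hs hst
    rintro z ⟨w, hw, rfl⟩
    have hss := Real.sqrt_pos.2 hs
    have hts := Real.sqrt_pos.2 (hs.trans_le hst)
    refine ⟨(Real.sqrt s / Real.sqrt t) • w, hstar.smul_mem hw (by positivity)
      (by rw [div_le_one hts]; exact Real.sqrt_le_sqrt hst), ?_⟩
    show Real.sqrt t • ((Real.sqrt s / Real.sqrt t) • w) = Real.sqrt s • w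
    rw [smul_smul, mul_comm, div_mul_cancel₀ _ hts.ne']
  have hsplit : ∀ s t : ℝ, 0 < s → s ≤ t →
      (∫⁻ z in Real.sqrt t • Ωi, ENNReal.ofReal (f z)) =
        (∫⁻ z in Real.sqrt s • Ωi, ENNReal.ofReal (f z)) +
        (∫⁻ z in Real.sqrt t • Ωi \ Real.sqrt s • Ωi, ENNReal.ofReal (f z)) := by
    intro s t hs hst
    rw [← lintegral_union ((hsm t).diff (hsm s)) disjoint_sdiff_self_right,
      union_diff_cancel (hdil s t hs hst)]
  have hγx : 0 < x := hγ₁.trans_le hx.1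
  have hγm : 0 < m := hγ₁.trans_le hm.1
  have key := aux_key hn f hf_nonneg hf_meas γ₁ γ₂ hγ₁ Ωi hmeas hstar dmin dmax hdmin
    hsub hsup hmono hx.1 hxm hmy hy.2
  set L1 := ∫⁻ z in Real.sqrt m • Ωi \ Real.sqrt x • Ωi, ENNReal.ofReal (f z) with hL1def
  set L2 := ∫⁻ z in Real.sqrt y • Ωi \ Real.sqrt m • Ωi, ENNReal.ofReal (f z) with hL2def
  have hL1 : L1 ≠ ∞ := hfin _
  have hL2 : L2 ≠ ∞ := hfin _
  have hreal : (m - x) * L2.toReal ≤ (y - m) * L1.toReal := by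
    have h2 := ENNReal.toReal_mono (ENNReal.mul_ne_top ENNReal.ofReal_ne_top hL1) key
    rwa [ENNReal.toReal_mul, ENNReal.toReal_mul, ENNReal.toReal_ofReal (by linarith),
      ENNReal.toReal_ofReal (by linarith)] at h2
  have hGm : ∫ z in Real.sqrt m • Ωi, f z = (∫ z in Real.sqrt x • Ωi, f z) + L1.toReal := by
    rw [hG, hG, hsplit x m hγx hxm, ENNReal.toReal_add (hfin _) hL1]
  have hGy : ∫ z in Real.sqrt y • Ωi, f z = (∫ z in Real.sqrt m • Ωi, f z) + L2.toReal := by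
    rw [hG, hG, hsplit m y hγm hmy, ENNReal.toReal_add (hfin _) hL2]
  have ht1 : 0 ≤ L1.toReal := ENNReal.toReal_nonneg
  have ht2 : 0 ≤ L2.toReal := ENNReal.toReal_nonneg
  rw [hmx, hym] at hreal
  have hq : b * L2.toReal ≤ a * L1.toReal := by
    have h3 : b * L2.toReal * (y - x) ≤ a * L1.toReal * (y - x) := by linarith [hreal]
    exact le_of_mul_le_mul_right h3 (sub_pos.2 hlt)
  have ha' : a = 1 - b := by linarith
  subst ha'
  rw [hGy, hGm]
  linarith [hq, ht1, ht2]

/-- For an arbitrary noise density `f` whose radial power density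
`p ↦ p^((n-2)/2) f(√p • u)` is non-increasing on `[γ₁ d_min², γ₂ d_max²]` along
every direction `u`, the SER of a decoder with center-convex decision regions is
convex in the SNR on `[γ₁, γ₂]`. -/
theorem ser_convex_general_noise_density
    (n M : ℕ) (hn : 1 ≤ n)
    (f : EuclideanSpace ℝ (Fin n) → ℝ)
    (hf_nonneg : ∀ x, 0 ≤ f x) (hf_meas : Measurable f)
    (hf_int : Integrable f)
    (γ₁ γ₂ : ℝ) (hγ₁ : 0 < γ₁) (hγ₁₂ : γ₁ ≤ γ₂)
    (q : Fin M → ℝ) (hq : ∀ i, 0 ≤ q i) (hqsum : ∑ i, q i = 1)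
    (Ω : Fin M → Set (EuclideanSpace ℝ (Fin n)))
    (hΩmeas : ∀ i, MeasurableSet (Ω i))
    (hΩstar : ∀ i, StarConvex ℝ (0 : EuclideanSpace ℝ (Fin n)) (Ω i))
    (dmin dmax : ℝ) (hdmin : 0 < dmin) (hdd : dmin ≤ dmax)
    (hball : ∀ i, Metric.closedBall (0 : EuclideanSpace ℝ (Fin n)) dmin ⊆ Ω i ∧
      Ω i ⊆ Metric.closedBall (0 : EuclideanSpace ℝ (Fin n)) dmax)
    (hmono : ∀ u : EuclideanSpace ℝ (Fin n), ‖u‖ = 1 →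
      AntitoneOn (fun p : ℝ => p ^ (((n : ℝ) - 2) / 2) * f (Real.sqrt p • u))
        (Icc (γ₁ * dmin ^ 2) (γ₂ * dmax ^ 2)))
    (Pe : ℝ → ℝ)
    (hPe : ∀ γ, Pe γ = 1 - ∑ i, q i * ∫ x in Real.sqrt γ • Ω i, f x) :
    ConvexOn ℝ (Icc γ₁ γ₂) Pe := by
  refine ⟨convex_Icc _ _, fun x hx y hy a b ha hb hab => ?_⟩
  simp only [smul_eq_mul]
  rw [hPe, hPe, hPe]
  have key : ∀ i : Fin M,
      a * (∫ z in Real.sqrt x • Ω i, f z) + b * (∫ z in Real.sqrt y • Ω i, f z)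
        ≤ ∫ z in Real.sqrt (a * x + b * y) • Ω i, f z := by
    intro i
    rcases le_total x y with h | h
    · exact aux_core hn f hf_nonneg hf_meas hf_int γ₁ γ₂ hγ₁ (Ω i) (hΩmeas i) (hΩstar i)
        dmin dmax hdmin (hball i).1 (hball i).2 hmono hx hy h ha hb hab
    · have h2 := aux_core hn f hf_nonneg hf_meas hf_int γ₁ γ₂ hγ₁ (Ω i) (hΩmeas i) (hΩstar i)
        dmin dmax hdmin (hball i).1 (hball i).2 hmono hy hx h hb ha (by linarith)
      have e : b * y + a * x = a * x + b * y := by ring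
      rw [e] at h2
      linarith [h2]
  have hsum : ∑ i, q i * (a * (∫ z in Real.sqrt x • Ω i, f z) +
      b * (∫ z in Real.sqrt y • Ω i, f z)) ≤
      ∑ i, q i * ∫ z in Real.sqrt (a * x + b * y) • Ω i, f z :=
    Finset.sum_le_sum fun i _ => mul_le_mul_of_nonneg_left (key i) (hq i)
  have h1 : a * (∑ i, q i * ∫ z in Real.sqrt x • Ω i, f z) +
      b * (∑ i, q i * ∫ z in Real.sqrt y • Ω i, f z) =
      ∑ i, q i * (a * (∫ z in Real.sqrt x • Ω i, f z) +
        b * (∫ z in Real.sqrt y • Ω i, f z)) := by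
    rw [Finset.mul_sum, Finset.mul_sum, ← Finset.sum_add_distrib]
    exact Finset.sum_congr rfl fun i _ => by ring
  linarith [hsum, h1, hab]
end

section
/- Let n ≥ 1 and let f : E → ℝ be a nonnegative, measurable, integrable function such that for every unit vector u ∈ E the function p ↦ p^{(n−2)/2} · f(√p • u) is antitone (non-increasing) on (0, ∞). Then for any decoder with center-convex decision regions (each Ω_i measurable and star-shaped about the origin), the symbol error rate P_e(γ) = 1 − Σ_{i=1}^{M} q_i ∫_{√γ • Ω_i} f(x) dx is convex on (0, ∞). -/
open MeasureTheory Real Set Pointwise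
open scoped ENNReal NNReal

lemma key_Ioc_le (h : ℝ → ℝ≥0∞) (hmono : AntitoneOn h (Ioi 0))
    {s : ℝ} (hs : 0 ≤ s) {a b lam mu : ℝ} (ha : 0 < a) (hab : a ≤ b)
    (hlam : 0 ≤ lam) (hmu : 0 ≤ mu) (hlm : lam + mu = 1) :
    ENNReal.ofReal lam * (∫⁻ t in Ioc 0 (a*s), h t)
      + ENNReal.ofReal mu * (∫⁻ t in Ioc 0 (b*s), h t)
      ≤ ∫⁻ t in Ioc 0 ((lam*a+mu*b)*s), h t := by
  set c := lam*a+mu*b with hc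
  have hb : 0 < b := lt_of_lt_of_le ha hab
  have hac : a ≤ c := by nlinarith
  have hcb : c ≤ b := by nlinarith
  have hc0 : 0 < c := lt_of_lt_of_le ha hac
  have hsplit1 : Ioc (0:ℝ) (c*s) = Ioc 0 (a*s) ∪ Ioc (a*s) (c*s) :=
    (Ioc_union_Ioc_eq_Ioc (by positivity) (by nlinarith)).symm
  have hsplit2 : Ioc (0:ℝ) (b*s) = Ioc 0 (c*s) ∪ Ioc (c*s) (b*s) :=
    (Ioc_union_Ioc_eq_Ioc (by positivity) (by nlinarith)).symm
  set X := ∫⁻ t in Ioc (a*s) (c*s), h t with hX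
  set Y := ∫⁻ t in Ioc (c*s) (b*s), h t with hY
  have e1 : ∫⁻ t in Ioc 0 (c*s), h t = (∫⁻ t in Ioc 0 (a*s), h t) + X := by
    rw [hsplit1, lintegral_union measurableSet_Ioc (Ioc_disjoint_Ioc_of_le le_rfl)]
  have e2 : ∫⁻ t in Ioc 0 (b*s), h t = (∫⁻ t in Ioc 0 (c*s), h t) + Y := by
    rw [hsplit2, lintegral_union measurableSet_Ioc (Ioc_disjoint_Ioc_of_le le_rfl)]
  -- central estimate
  have hkey : ENNReal.ofReal mu * Y ≤ ENNReal.ofReal lam * X := by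
    rcases eq_or_lt_of_le hs with rfl | hs'
    · simp [hY, hX]
    have hcs : 0 < c*s := by positivity
    have hYle : Y ≤ h (c*s) * ENNReal.ofReal (b*s - c*s) := by
      calc Y ≤ ∫⁻ _ in Ioc (c*s) (b*s), h (c*s) := by
            refine setLIntegral_mono measurable_const (fun t ht => ?_)
            exact hmono (mem_Ioi.2 hcs) (mem_Ioi.2 (lt_trans hcs ht.1)) ht.1.le
        _ = h (c*s) * ENNReal.ofReal (b*s - c*s) := by
            rw [setLIntegral_const, Real.volume_Ioc]
    have hXge : h (c*s) * ENNReal.ofReal (c*s - a*s) ≤ X := by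
      calc h (c*s) * ENNReal.ofReal (c*s - a*s)
          = ∫⁻ _ in Ioc (a*s) (c*s), h (c*s) := by
            rw [setLIntegral_const, Real.volume_Ioc]
        _ ≤ X := by
            refine setLIntegral_mono' measurableSet_Ioc (fun t ht => ?_)
            have ht0 : 0 < t := lt_of_le_of_lt (by positivity : (0:ℝ) ≤ a*s) ht.1
            exact hmono (mem_Ioi.2 ht0) (mem_Ioi.2 hcs) ht.2
    calc ENNReal.ofReal mu * Y ≤ ENNReal.ofReal mu * (h (c*s) * ENNReal.ofReal (b*s - c*s)) :=
          mul_le_mul_right hYle _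
      _ = h (c*s) * ENNReal.ofReal (mu * (b*s - c*s)) := by
          rw [ENNReal.ofReal_mul hmu]; ring
      _ = h (c*s) * ENNReal.ofReal (lam * (c*s - a*s)) := by
          congr 2
          nlinarith
      _ = ENNReal.ofReal lam * (h (c*s) * ENNReal.ofReal (c*s - a*s)) := by
          rw [ENNReal.ofReal_mul hlam]; ring
      _ ≤ ENNReal.ofReal lam * X := mul_le_mul_right hXge _
  rw [e2]
  calc ENNReal.ofReal lam * (∫⁻ t in Ioc 0 (a*s), h t)
        + ENNReal.ofReal mu * ((∫⁻ t in Ioc 0 (c*s), h t) + Y)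
      = (ENNReal.ofReal lam * (∫⁻ t in Ioc 0 (a*s), h t)
        + ENNReal.ofReal mu * (∫⁻ t in Ioc 0 (c*s), h t)) + ENNReal.ofReal mu * Y := by ring
    _ ≤ (ENNReal.ofReal lam * (∫⁻ t in Ioc 0 (a*s), h t)
        + ENNReal.ofReal mu * (∫⁻ t in Ioc 0 (c*s), h t)) + ENNReal.ofReal lam * X :=
        add_le_add_right hkey _
    _ = ENNReal.ofReal lam * ((∫⁻ t in Ioc 0 (a*s), h t) + X)
        + ENNReal.ofReal mu * (∫⁻ t in Ioc 0 (c*s), h t) := by ring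
    _ = (ENNReal.ofReal lam + ENNReal.ofReal mu) * (∫⁻ t in Ioc 0 (c*s), h t) := by
        rw [← e1]; ring
    _ = ∫⁻ t in Ioc 0 (c*s), h t := by
        rw [← ENNReal.ofReal_add hlam hmu, hlm, ENNReal.ofReal_one, one_mul]

lemma key_Ioc (h : ℝ → ℝ≥0∞) (hmono : AntitoneOn h (Ioi 0))
    {s : ℝ} (hs : 0 ≤ s) {a b lam mu : ℝ} (ha : 0 < a) (hb : 0 < b)
    (hlam : 0 ≤ lam) (hmu : 0 ≤ mu) (hlm : lam + mu = 1) :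
    ENNReal.ofReal lam * (∫⁻ t in Ioc 0 (a*s), h t)
      + ENNReal.ofReal mu * (∫⁻ t in Ioc 0 (b*s), h t)
      ≤ ∫⁻ t in Ioc 0 ((lam*a+mu*b)*s), h t := by
  rcases le_total a b with hab | hab
  · exact key_Ioc_le h hmono hs ha hab hlam hmu hlm
  · rw [add_comm (ENNReal.ofReal lam * _), show lam*a+mu*b = mu*b+lam*a from by ring]
    exact key_Ioc_le h hmono hs hb hab hmu hlam (by linarith)

lemma key_dc (T : Set ℝ) (hT : T ⊆ Ioi 0)
    (hdc : ∀ t ∈ T, ∀ t', 0 < t' → t' ≤ t → t' ∈ T)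
    (h : ℝ → ℝ≥0∞) (hmono : AntitoneOn h (Ioi 0))
    {a b lam mu : ℝ} (ha : 0 < a) (hb : 0 < b)
    (hlam : 0 ≤ lam) (hmu : 0 ≤ mu) (hlm : lam + mu = 1) :
    ENNReal.ofReal lam * (∫⁻ t in {t : ℝ | 0 < t ∧ t / a ∈ T}, h t)
      + ENNReal.ofReal mu * (∫⁻ t in {t : ℝ | 0 < t ∧ t / b ∈ T}, h t)
      ≤ ∫⁻ t in {t : ℝ | 0 < t ∧ t / (lam*a+mu*b) ∈ T}, h t := by
  have hc0 : 0 < lam*a+mu*b := by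
    have hmin : 0 < min a b := lt_min ha hb
    have h1 : lam * min a b ≤ lam * a := mul_le_mul_of_nonneg_left (min_le_left a b) hlam
    have h2 : mu * min a b ≤ mu * b := mul_le_mul_of_nonneg_left (min_le_right a b) hmu
    have h3 : lam * min a b + mu * min a b = min a b := by rw [← add_mul, hlm, one_mul]
    linarith
  by_cases hbdd : BddAbove T
  · rcases T.eq_empty_or_nonempty with rfl | hne
    · simp only [mem_empty_iff_false, and_false, setOf_false]
      simp
    · set s := sSup T with hsdef
      have hs0 : 0 ≤ s := le_trans (le_of_lt (hT hne.some_mem)) (le_csSup hbdd hne.some_mem)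
      have hrepr : ∀ γ : ℝ, 0 < γ →
          (∫⁻ t in {t : ℝ | 0 < t ∧ t / γ ∈ T}, h t) = ∫⁻ t in Ioc 0 (γ*s), h t := by
        intro γ hγ
        have hsub1 : Ioo (0:ℝ) (γ*s) ⊆ {t : ℝ | 0 < t ∧ t / γ ∈ T} := by
          intro t ht
          refine ⟨ht.1, ?_⟩
          have hlt : t / γ < s := by
            rw [div_lt_iff₀ hγ]; linarith [ht.2, mul_comm γ s]
          obtain ⟨t', ht'T, htt'⟩ := exists_lt_of_lt_csSup hne hlt
          exact hdc t' ht'T _ (div_pos ht.1 hγ) htt'.le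
        have hsub2 : {t : ℝ | 0 < t ∧ t / γ ∈ T} ⊆ Ioc 0 (γ*s) := by
          intro t ht
          refine ⟨ht.1, ?_⟩
          have := le_csSup hbdd ht.2
          rw [div_le_iff₀ hγ] at this
          linarith [mul_comm s γ]
        refine le_antisymm (lintegral_mono_set hsub2) ?_
        calc ∫⁻ t in Ioc 0 (γ*s), h t = ∫⁻ t in Ioo 0 (γ*s), h t :=
              (setLIntegral_congr Ioo_ae_eq_Ioc).symm
          _ ≤ _ := lintegral_mono_set hsub1
      rw [hrepr a ha, hrepr b hb, hrepr _ hc0]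
      exact key_Ioc h hmono hs0 ha hb hlam hmu hlm
  · have hT' : ∀ x : ℝ, 0 < x → x ∈ T := by
      intro x hx
      obtain ⟨t, htT, hxt⟩ := not_bddAbove_iff.1 hbdd x
      exact hdc t htT x hx hxt.le
    have hset : ∀ γ : ℝ, 0 < γ → {t : ℝ | 0 < t ∧ t / γ ∈ T} = Ioi 0 := by
      intro γ hγ
      ext t
      simp only [mem_setOf_eq, mem_Ioi]
      exact ⟨fun h => h.1, fun h => ⟨h, hT' _ (div_pos h hγ)⟩⟩
    rw [hset a ha, hset b hb, hset _ hc0, ← add_mul,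
      ← ENNReal.ofReal_add hlam hmu, hlm, ENNReal.ofReal_one, one_mul]

lemma weight_eq (n : ℕ) (hn : 1 ≤ n) {t : ℝ} (ht : 0 < t) :
    (1 / (2 * Real.sqrt t)) * (Real.sqrt t ^ (n-1)) = t ^ (((n:ℝ)-2)/2) / 2 := by
  have hsp : Real.sqrt t = t ^ ((1:ℝ)/2) := Real.sqrt_eq_rpow t
  have h1 : Real.sqrt t ^ (n-1) = t ^ (((n:ℝ)-1)/2) := by
    rw [← Real.rpow_natCast (Real.sqrt t) (n-1), hsp, ← Real.rpow_mul ht.le]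
    congr 1
    rw [Nat.cast_sub hn, Nat.cast_one]
    ring
  have hne : t ^ ((1:ℝ)/2) ≠ 0 := (Real.rpow_pos_of_pos ht _).ne'
  rw [h1, hsp, show ((n:ℝ)-2)/2 = (((n:ℝ)-1)/2) + (-((1:ℝ)/2)) from by ring,
    Real.rpow_add ht, Real.rpow_neg ht.le]
  field_simp

lemma inner_repr (n : ℕ) (hn : 1 ≤ n) (f : EuclideanSpace ℝ (Fin n) → ℝ)
    (hf_meas : Measurable f) (Ωi : Set (EuclideanSpace ℝ (Fin n))) (hΩm : MeasurableSet Ωi)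
    (u : EuclideanSpace ℝ (Fin n)) (γ : ℝ) (hγ : 0 < γ) :
    ∫⁻ (r : Ioi (0:ℝ)), (Real.sqrt γ • Ωi).indicator (fun x => ENNReal.ofReal (f x))
        ((r : ℝ) • u) ∂(Measure.volumeIoiPow (n-1))
      = ∫⁻ t in {t : ℝ | 0 < t ∧ t / γ ∈ {p : ℝ | 0 < p ∧ Real.sqrt p • u ∈ Ωi}},
          ENNReal.ofReal ((t ^ (((n:ℝ)-2)/2) * f (Real.sqrt t • u)) / 2) := by
  have hγ' : Real.sqrt γ ≠ 0 := (Real.sqrt_pos.2 hγ).ne'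
  set F : EuclideanSpace ℝ (Fin n) → ℝ≥0∞ := fun x => ENNReal.ofReal (f x) with hF
  have hFm : Measurable F := hf_meas.ennreal_ofReal
  have hsm : MeasurableSet (Real.sqrt γ • Ωi) := hΩm.const_smul₀ (Real.sqrt γ)
  have hindm : Measurable ((Real.sqrt γ • Ωi).indicator F) := hFm.indicator hsm
  set T : Set ℝ := {p : ℝ | 0 < p ∧ Real.sqrt p • u ∈ Ωi} with hT
  set S : Set ℝ := {t : ℝ | 0 < t ∧ t / γ ∈ T} with hS
  have hTm : MeasurableSet T := by
    have : Measurable fun p : ℝ => Real.sqrt p • u :=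
      (Real.continuous_sqrt.smul continuous_const).measurable
    exact measurableSet_Ioi.inter (this hΩm)
  have hSm : MeasurableSet S :=
    measurableSet_Ioi.inter ((measurable_id.div_const γ) hTm)
  -- Step 1: unfold volumeIoiPow and the subtype integral
  have step1 : ∫⁻ (r : Ioi (0:ℝ)), (Real.sqrt γ • Ωi).indicator F ((r : ℝ) • u)
        ∂(Measure.volumeIoiPow (n-1))
      = ∫⁻ r in Ioi (0:ℝ), ENNReal.ofReal (r ^ (n-1)) *
          (Real.sqrt γ • Ωi).indicator F (r • u) := by
    rw [Measure.volumeIoiPow, lintegral_withDensity_eq_lintegral_mul _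
      ((measurable_subtype_coe.pow_const _).ennreal_ofReal)
      (show Measurable fun r : Ioi (0:ℝ) => (Real.sqrt γ • Ωi).indicator F ((r : ℝ) • u) from
        hindm.comp (measurable_subtype_coe.smul_const u)),
      ← lintegral_subtype_comap measurableSet_Ioi
        (fun r => ENNReal.ofReal (r ^ (n-1)) * (Real.sqrt γ • Ωi).indicator F (r • u))]
    rfl
  -- Step 2: change of variables r = sqrt t
  have himg : Real.sqrt '' (Ioi (0:ℝ)) = Ioi 0 := by
    ext y
    constructor
    · rintro ⟨x, hx, rfl⟩
      exact Real.sqrt_pos.2 hx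
    · intro hy
      exact ⟨y^2, mem_Ioi.2 (pow_pos hy 2), by rw [Real.sqrt_sq hy.le]⟩
  have hinj : InjOn Real.sqrt (Ioi (0:ℝ)) := fun x hx y hy hxy => by
    have := congrArg (fun z : ℝ => z ^ 2) hxy
    simpa [Real.sq_sqrt (le_of_lt hx), Real.sq_sqrt (le_of_lt hy)] using this
  have hderiv : ∀ x ∈ Ioi (0:ℝ), HasFDerivWithinAt Real.sqrt
      ((1 : ℝ →L[ℝ] ℝ).smulRight (1 / (2 * Real.sqrt x))) (Ioi 0) x := fun x hx =>
    (Real.hasDerivAt_sqrt (ne_of_gt hx)).hasDerivWithinAt.hasFDerivWithinAt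
  have step2 : ∫⁻ r in Ioi (0:ℝ), ENNReal.ofReal (r ^ (n-1)) *
          (Real.sqrt γ • Ωi).indicator F (r • u)
      = ∫⁻ t in Ioi (0:ℝ), ENNReal.ofReal |1 / (2 * Real.sqrt t)| *
          (ENNReal.ofReal (Real.sqrt t ^ (n-1)) *
            (Real.sqrt γ • Ωi).indicator F (Real.sqrt t • u)) := by
    conv_lhs => rw [← himg]
    rw [lintegral_image_eq_lintegral_abs_det_fderiv_mul volume measurableSet_Ioi
      hderiv hinj (fun r => ENNReal.ofReal (r ^ (n-1)) *
        (Real.sqrt γ • Ωi).indicator F (r • u))]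
    simp only [ContinuousLinearMap.smulRight_one_eq_toSpanSingleton, ContinuousLinearMap.det_toSpanSingleton]
  -- Step 3: pointwise identification with the indicator of S
  have hmem_iff : ∀ t : ℝ, 0 < t →
      ((Real.sqrt t • u ∈ Real.sqrt γ • Ωi) ↔ t ∈ S) := by
    intro t ht
    rw [mem_smul_set_iff_inv_smul_mem₀ hγ']
    have : (Real.sqrt γ)⁻¹ • Real.sqrt t • u = Real.sqrt (t / γ) • u := by
      rw [smul_smul, Real.sqrt_div ht.le, div_eq_inv_mul]
    rw [this]
    constructor
    · intro hmem
      exact ⟨ht, div_pos ht hγ, hmem⟩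
    · intro hmem
      exact hmem.2.2
  have step3 : ∫⁻ t in Ioi (0:ℝ), ENNReal.ofReal |1 / (2 * Real.sqrt t)| *
          (ENNReal.ofReal (Real.sqrt t ^ (n-1)) *
            (Real.sqrt γ • Ωi).indicator F (Real.sqrt t • u))
      = ∫⁻ t in Ioi (0:ℝ), S.indicator
          (fun t => ENNReal.ofReal ((t ^ (((n:ℝ)-2)/2) * f (Real.sqrt t • u)) / 2)) t := by
    refine setLIntegral_congr_fun measurableSet_Ioi (fun t ht => ?_)
    have ht : (0:ℝ) < t := ht
    have hsq : 0 < Real.sqrt t := Real.sqrt_pos.2 ht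
    have habs : |1 / (2 * Real.sqrt t)| = 1 / (2 * Real.sqrt t) := abs_of_pos (by positivity)
    by_cases hmem : t ∈ S
    · have hx : Real.sqrt t • u ∈ Real.sqrt γ • Ωi := by
        rw [hmem_iff t ht]; exact hmem
      rw [indicator_of_mem hmem, indicator_of_mem hx, hF, habs,
        ← ENNReal.ofReal_mul (by positivity), ← ENNReal.ofReal_mul (by positivity)]
      congr 1
      rw [← mul_assoc, weight_eq n hn ht]
      ring
    · have hx : Real.sqrt t • u ∉ Real.sqrt γ • Ωi := by
        rw [hmem_iff t ht]; exact hmem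
      rw [indicator_of_notMem hmem, indicator_of_notMem hx, mul_zero, mul_zero]
  -- Step 4: indicator to set integral
  have step4 : ∫⁻ t in Ioi (0:ℝ), S.indicator
          (fun t => ENNReal.ofReal ((t ^ (((n:ℝ)-2)/2) * f (Real.sqrt t • u)) / 2)) t
      = ∫⁻ t in S, ENNReal.ofReal ((t ^ (((n:ℝ)-2)/2) * f (Real.sqrt t • u)) / 2) := by
    rw [lintegral_indicator hSm, Measure.restrict_restrict hSm,
      inter_eq_left.2 (fun t ht => ht.1)]
  rw [step1, step2, step3, step4]

set_option maxHeartbeats 1000000 in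
/-- If the radial noise power density `p ↦ p^((n-2)/2) f(√p • u)`
is non-increasing on `(0, ∞)` along every direction, then the SER of any decoder
with center-convex decision regions is convex in the SNR on `(0, ∞)`. -/
theorem ser_always_convex_decreasing_power_density
    (n M : ℕ) (hn : 1 ≤ n)
    (f : EuclideanSpace ℝ (Fin n) → ℝ)
    (hf_nonneg : ∀ x, 0 ≤ f x) (hf_meas : Measurable f)
    (hf_int : Integrable f)
    (hanti : ∀ u : EuclideanSpace ℝ (Fin n), ‖u‖ = 1 →
      AntitoneOn (fun p : ℝ => p ^ (((n : ℝ) - 2) / 2) * f (Real.sqrt p • u))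
        (Ioi (0 : ℝ)))
    (q : Fin M → ℝ) (hq : ∀ i, 0 ≤ q i) (hqsum : ∑ i, q i = 1)
    (Ω : Fin M → Set (EuclideanSpace ℝ (Fin n)))
    (hΩmeas : ∀ i, MeasurableSet (Ω i))
    (hΩstar : ∀ i, StarConvex ℝ (0 : EuclideanSpace ℝ (Fin n)) (Ω i))
    (Pe : ℝ → ℝ)
    (hPe : ∀ γ, Pe γ = 1 - ∑ i, q i * ∫ x in Real.sqrt γ • Ω i, f x) :
    ConvexOn ℝ (Ioi (0 : ℝ)) Pe := by
  classical
  haveI hne : Nonempty (Fin n) := ⟨⟨0, hn⟩⟩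
  haveI : Nontrivial (EuclideanSpace ℝ (Fin n)) := inferInstance
  have hfr : Module.finrank ℝ (EuclideanSpace ℝ (Fin n)) = n := finrank_euclideanSpace_fin
  set F : EuclideanSpace ℝ (Fin n) → ℝ≥0∞ := fun x => ENNReal.ofReal (f x) with hFdef
  have hFm : Measurable F := hf_meas.ennreal_ofReal
  have mp := Measure.measurePreserving_homeomorphUnitSphereProd
    (volume : Measure (EuclideanSpace ℝ (Fin n)))
  rw [hfr] at mp
  -- representation of the lintegral over the dilated region
  have hrepr : ∀ (i : Fin M) (γ : ℝ), 0 < γ →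
      (∫⁻ x in Real.sqrt γ • Ω i, F x)
        = ∫⁻ u : Metric.sphere (0 : EuclideanSpace ℝ (Fin n)) 1,
            (∫⁻ t in {t : ℝ | 0 < t ∧ t / γ ∈
                {p : ℝ | 0 < p ∧ Real.sqrt p • (u : EuclideanSpace ℝ (Fin n)) ∈ Ω i}},
              ENNReal.ofReal ((t ^ (((n:ℝ)-2)/2)
                * f (Real.sqrt t • (u : EuclideanSpace ℝ (Fin n)))) / 2))
            ∂((volume : Measure (EuclideanSpace ℝ (Fin n))).toSphere) := by
    intro i γ hγ
    have hsm : MeasurableSet (Real.sqrt γ • Ω i) := (hΩmeas i).const_smul₀ (Real.sqrt γ)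
    have hkm : Measurable fun p : Metric.sphere (0 : EuclideanSpace ℝ (Fin n)) 1 × Ioi (0:ℝ)
        => (Real.sqrt γ • Ω i).indicator F ((p.2 : ℝ) • (p.1 : EuclideanSpace ℝ (Fin n))) := by
      have hc : Continuous fun p : Metric.sphere (0 : EuclideanSpace ℝ (Fin n)) 1 × Ioi (0:ℝ)
          => ((p.2 : ℝ) • (p.1 : EuclideanSpace ℝ (Fin n))) :=
        (continuous_subtype_val.comp continuous_snd).smul
          (continuous_subtype_val.comp continuous_fst)
      exact (hFm.indicator hsm).comp hc.measurable
    calc ∫⁻ x in Real.sqrt γ • Ω i, F x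
        = ∫⁻ x, (Real.sqrt γ • Ω i).indicator F x := (lintegral_indicator hsm F).symm
      _ = ∫⁻ x in ({0}ᶜ : Set (EuclideanSpace ℝ (Fin n))),
            (Real.sqrt γ • Ω i).indicator F x := by
          rw [restrict_compl_singleton]
      _ = ∫⁻ x : (({0}ᶜ : Set (EuclideanSpace ℝ (Fin n)))),
            (Real.sqrt γ • Ω i).indicator F ↑x ∂(volume.comap Subtype.val) :=
          (lintegral_subtype_comap (measurableSet_singleton 0).compl _).symm
      _ = ∫⁻ p : Metric.sphere (0 : EuclideanSpace ℝ (Fin n)) 1 × Ioi (0:ℝ),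
            (Real.sqrt γ • Ω i).indicator F ((p.2 : ℝ) • (p.1 : EuclideanSpace ℝ (Fin n)))
            ∂(((volume : Measure (EuclideanSpace ℝ (Fin n))).toSphere).prod
              (Measure.volumeIoiPow (n-1))) := by
          rw [MeasurePreserving.lintegral_map_equiv _
            (homeomorphUnitSphereProd (EuclideanSpace ℝ (Fin n))).toMeasurableEquiv mp]
          refine lintegral_congr fun x => ?_
          congr 1
          simp only [Homeomorph.toMeasurableEquiv_coe, homeomorphUnitSphereProd_apply_snd_coe,
            homeomorphUnitSphereProd_apply_fst_coe]
          exact (smul_inv_smul₀ (norm_ne_zero_iff.2 x.2) _).symm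
      _ = ∫⁻ u : Metric.sphere (0 : EuclideanSpace ℝ (Fin n)) 1,
            (∫⁻ r : Ioi (0:ℝ), (Real.sqrt γ • Ω i).indicator F
              ((r : ℝ) • (u : EuclideanSpace ℝ (Fin n))) ∂(Measure.volumeIoiPow (n-1)))
            ∂((volume : Measure (EuclideanSpace ℝ (Fin n))).toSphere) :=
          lintegral_prod _ hkm.aemeasurable
      _ = _ := lintegral_congr fun u =>
          inner_repr n hn f hf_meas (Ω i) (hΩmeas i) (u : EuclideanSpace ℝ (Fin n)) γ hγ
  -- ENNReal concavity
  have hposc : ∀ {a b lam mu : ℝ}, 0 < a → 0 < b → 0 ≤ lam → 0 ≤ mu → lam + mu = 1 →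
      0 < lam * a + mu * b := by
    intro a b lam mu ha hb hlam hmu hlm
    have hmin : 0 < min a b := lt_min ha hb
    have h1 : lam * min a b ≤ lam * a := mul_le_mul_of_nonneg_left (min_le_left a b) hlam
    have h2 : mu * min a b ≤ mu * b := mul_le_mul_of_nonneg_left (min_le_right a b) hmu
    have h3 : lam * min a b + mu * min a b = min a b := by rw [← add_mul, hlm, one_mul]
    linarith
  have hconcE : ∀ (i : Fin M) {a b lam mu : ℝ}, 0 < a → 0 < b →
      0 ≤ lam → 0 ≤ mu → lam + mu = 1 →
      ENNReal.ofReal lam * (∫⁻ x in Real.sqrt a • Ω i, F x)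
        + ENNReal.ofReal mu * (∫⁻ x in Real.sqrt b • Ω i, F x)
        ≤ ∫⁻ x in Real.sqrt (lam * a + mu * b) • Ω i, F x := by
    intro i a b lam mu ha hb hlam hmu hlm
    have hc : 0 < lam * a + mu * b := hposc ha hb hlam hmu hlm
    rw [hrepr i a ha, hrepr i b hb, hrepr i _ hc]
    set Ia := fun u : Metric.sphere (0 : EuclideanSpace ℝ (Fin n)) 1 =>
      ∫⁻ t in {t : ℝ | 0 < t ∧ t / a ∈
          {p : ℝ | 0 < p ∧ Real.sqrt p • (u : EuclideanSpace ℝ (Fin n)) ∈ Ω i}},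
        ENNReal.ofReal ((t ^ (((n:ℝ)-2)/2)
          * f (Real.sqrt t • (u : EuclideanSpace ℝ (Fin n)))) / 2) with hIa
    set Ib := fun u : Metric.sphere (0 : EuclideanSpace ℝ (Fin n)) 1 =>
      ∫⁻ t in {t : ℝ | 0 < t ∧ t / b ∈
          {p : ℝ | 0 < p ∧ Real.sqrt p • (u : EuclideanSpace ℝ (Fin n)) ∈ Ω i}},
        ENNReal.ofReal ((t ^ (((n:ℝ)-2)/2)
          * f (Real.sqrt t • (u : EuclideanSpace ℝ (Fin n)))) / 2) with hIb
    set Ic := fun u : Metric.sphere (0 : EuclideanSpace ℝ (Fin n)) 1 =>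
      ∫⁻ t in {t : ℝ | 0 < t ∧ t / (lam * a + mu * b) ∈
          {p : ℝ | 0 < p ∧ Real.sqrt p • (u : EuclideanSpace ℝ (Fin n)) ∈ Ω i}},
        ENNReal.ofReal ((t ^ (((n:ℝ)-2)/2)
          * f (Real.sqrt t • (u : EuclideanSpace ℝ (Fin n)))) / 2) with hIc
    have hptwise : ∀ u : Metric.sphere (0 : EuclideanSpace ℝ (Fin n)) 1,
        ENNReal.ofReal lam * Ia u + ENNReal.ofReal mu * Ib u ≤ Ic u := by
      intro u
      have hu : ‖(u : EuclideanSpace ℝ (Fin n))‖ = 1 := mem_sphere_zero_iff_norm.1 u.2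
      set T := {p : ℝ | 0 < p ∧ Real.sqrt p • (u : EuclideanSpace ℝ (Fin n)) ∈ Ω i} with hTd
      have hTsub : T ⊆ Ioi 0 := fun p hp => hp.1
      have hdc : ∀ p ∈ T, ∀ p', 0 < p' → p' ≤ p → p' ∈ T := by
        intro p hp p' hp' hle
        refine ⟨hp', ?_⟩
        have hps : 0 < Real.sqrt p := Real.sqrt_pos.2 hp.1
        have hcoef0 : 0 ≤ Real.sqrt p' / Real.sqrt p := by positivity
        have hcoef1 : Real.sqrt p' / Real.sqrt p ≤ 1 :=
          (div_le_one hps).2 (Real.sqrt_le_sqrt hle)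
        have hstar := hΩstar i hp.2 (sub_nonneg.2 hcoef1) hcoef0 (by ring)
        rw [smul_zero, zero_add, smul_smul, div_mul_cancel₀ _ hps.ne'] at hstar
        exact hstar
      have hanti' : AntitoneOn (fun t : ℝ =>
          ENNReal.ofReal ((t ^ (((n:ℝ)-2)/2)
            * f (Real.sqrt t • (u : EuclideanSpace ℝ (Fin n)))) / 2)) (Ioi 0) := by
        intro x hx y hy hxy
        have := hanti (u : EuclideanSpace ℝ (Fin n)) hu hx hy hxy
        exact ENNReal.ofReal_le_ofReal (by linarith)
      exact key_dc T hTsub hdc _ hanti' ha hb hlam hmu hlm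
    calc ENNReal.ofReal lam * (∫⁻ u, Ia u ∂_) + ENNReal.ofReal mu * (∫⁻ u, Ib u ∂_)
        ≤ (∫⁻ u, ENNReal.ofReal lam * Ia u ∂_) + ∫⁻ u, ENNReal.ofReal mu * Ib u ∂_ :=
          add_le_add (lintegral_const_mul_le _ _) (lintegral_const_mul_le _ _)
      _ ≤ ∫⁻ u, (ENNReal.ofReal lam * Ia u + ENNReal.ofReal mu * Ib u) ∂_ :=
          le_lintegral_add _ _
      _ ≤ ∫⁻ u, Ic u ∂_ := lintegral_mono hptwise
  -- pass to real integrals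
  have hfin : ∀ (i : Fin M) (γ : ℝ), (∫⁻ x in Real.sqrt γ • Ω i, F x) ≠ ⊤ :=
    fun i γ => ((setLIntegral_le_lintegral _ _).trans_lt hf_int.lintegral_lt_top).ne
  have hint_repr : ∀ (i : Fin M) (γ : ℝ),
      ∫ x in Real.sqrt γ • Ω i, f x = (∫⁻ x in Real.sqrt γ • Ω i, F x).toReal := by
    intro i γ
    rw [integral_eq_lintegral_of_nonneg_ae (ae_of_all _ fun x => hf_nonneg x)
      hf_meas.aestronglyMeasurable.restrict]
  have hconc : ∀ i : Fin M, ConcaveOn ℝ (Ioi 0)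
      (fun γ => ∫ x in Real.sqrt γ • Ω i, f x) := by
    intro i
    refine ⟨convex_Ioi 0, fun a ha b hb lam mu hlam hmu hlm => ?_⟩
    have ha' : (0:ℝ) < a := ha
    have hb' : (0:ℝ) < b := hb
    have hc : 0 < lam * a + mu * b := hposc ha' hb' hlam hmu hlm
    simp only [smul_eq_mul]
    rw [hint_repr i a, hint_repr i b, hint_repr i (lam * a + mu * b)]
    have hle := hconcE i ha' hb' hlam hmu hlm
    have h1 : (ENNReal.ofReal lam * (∫⁻ x in Real.sqrt a • Ω i, F x)
        + ENNReal.ofReal mu * (∫⁻ x in Real.sqrt b • Ω i, F x)).toReal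
        = lam * (∫⁻ x in Real.sqrt a • Ω i, F x).toReal
          + mu * (∫⁻ x in Real.sqrt b • Ω i, F x).toReal := by
      rw [ENNReal.toReal_add (ENNReal.mul_ne_top ENNReal.ofReal_ne_top (hfin i a))
          (ENNReal.mul_ne_top ENNReal.ofReal_ne_top (hfin i b)),
        ENNReal.toReal_mul, ENNReal.toReal_mul,
        ENNReal.toReal_ofReal hlam, ENNReal.toReal_ofReal hmu]
    calc lam * (∫⁻ x in Real.sqrt a • Ω i, F x).toReal
          + mu * (∫⁻ x in Real.sqrt b • Ω i, F x).toReal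
        = (ENNReal.ofReal lam * (∫⁻ x in Real.sqrt a • Ω i, F x)
            + ENNReal.ofReal mu * (∫⁻ x in Real.sqrt b • Ω i, F x)).toReal := h1.symm
      _ ≤ (∫⁻ x in Real.sqrt (lam * a + mu * b) • Ω i, F x).toReal :=
          ENNReal.toReal_mono (hfin i _) hle
  -- sum and final assembly
  have hsum : ConcaveOn ℝ (Ioi (0:ℝ))
      (fun γ => ∑ i, q i * ∫ x in Real.sqrt γ • Ω i, f x) := by
    have : ∀ s : Finset (Fin M), ConcaveOn ℝ (Ioi (0:ℝ))
        (fun γ => ∑ i ∈ s, q i * ∫ x in Real.sqrt γ • Ω i, f x) := by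
      intro s
      induction s using Finset.induction with
      | empty => simpa using concaveOn_const (0:ℝ) (convex_Ioi (0:ℝ))
      | @insert j s hj ih =>
        have hterm : ConcaveOn ℝ (Ioi (0:ℝ))
            (fun γ => q j * ∫ x in Real.sqrt γ • Ω j, f x) := (hconc j).smul (hq j)
        have hadd := hterm.add ih
        simp only [Finset.sum_insert hj]
        exact hadd
    exact this Finset.univ
  have hPe' : Pe = fun γ => (-(fun γ => ∑ i, q i * ∫ x in Real.sqrt γ • Ω i, f x)) γ + 1 := by
    funext γ
    rw [hPe γ]
    simp [sub_eq_neg_add]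
  rw [hPe']
  exact hsum.neg.add_const 1
end
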